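/- arXiv:2512.19044 — 9 statements merged into one kernel-verified Lean document; each statement's English description precedes it below -/
import Mathlib

section
/- Let H be a graph and let 𝐇 be a family of connected subgraphs (regions) of H such that the union of any two members of 𝐇 is acyclic (𝐇 is 2-acyclic). If all members of 𝐇 share a common vertex, then the union of all members of 𝐇 is a tree. -/
open SimpleGraph

namespace Stmt1Aux

variable {W : Type*} {G : SimpleGraph W} {G' : G.Subgraph}

/-- The homomorphism from the coercion of a subgraph to its spanning coercion. -/
def coeHom (G' : G.Subgraph) : G'.coe →g G'.spanningCoe where
  toFun := Subtype.val
  map_rel' := fun h => h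

lemma coeHom_injective (G' : G.Subgraph) : Function.Injective (coeHom G') :=
  Subtype.val_injective

lemma getVert_map {V V' : Type*} {G : SimpleGraph V} {G'' : SimpleGraph V'} (f : G →g G'')
    {u v : V} (p : G.Walk u v) (n : ℕ) : (p.map f).getVert n = f (p.getVert n) := by
  induction p generalizing n with
  | nil => simp [SimpleGraph.Walk.getVert]
  | cons h p ih =>
    cases n with
    | zero => simp [SimpleGraph.Walk.getVert]
    | succ n => simpa [SimpleGraph.Walk.map_cons, SimpleGraph.Walk.getVert] using ih n

lemma liftWalk {u v : W} (w : G'.spanningCoe.Walk u v) :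
    ∀ (hu : u ∈ G'.verts), ∃ (hv : v ∈ G'.verts) (w' : G'.coe.Walk ⟨u, hu⟩ ⟨v, hv⟩),
      w'.map (coeHom G') = w := by
  induction w with
  | nil => intro hu; exact ⟨hu, .nil, rfl⟩
  | @cons a b c h p ih =>
    intro hu
    have hab : G'.Adj a b := h
    have hb : b ∈ G'.verts := G'.edge_vert hab.symm
    obtain ⟨hv, w', hw'⟩ := ih hb
    refine ⟨hv, .cons (show G'.coe.Adj ⟨a, hu⟩ ⟨b, hb⟩ from hab) w', ?_⟩
    rw [SimpleGraph.Walk.map_cons, hw']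
    rfl

lemma acyclic_iff : G'.coe.IsAcyclic ↔ G'.spanningCoe.IsAcyclic := by
  constructor
  · intro h v c hc
    have hv : v ∈ G'.verts := by
      cases c with
      | nil => exact absurd rfl hc.ne_nil
      | cons hadj p => exact G'.edge_vert hadj
    obtain ⟨hv', w', hw'⟩ := liftWalk c hv
    have hc2 : (w'.map (coeHom G')).IsCycle := hw'.symm ▸ hc
    exact h w' ((SimpleGraph.Walk.map_isCycle_iff_of_injective
      (coeHom_injective G')).mp hc2)
  · intro h v c hc
    exact h (c.map (coeHom G')) ((SimpleGraph.Walk.map_isCycle_iff_of_injective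
      (coeHom_injective G')).mpr hc)

end Stmt1Aux

open Stmt1Aux

/-- if a (nonempty) family of regions of `H` is 2-acyclic and all members
share a common vertex, then the union of all members is a tree. -/
theorem stmt1 {W ι : Type*} [Nonempty ι] (H : SimpleGraph W) (F : ι → H.Subgraph)
    (hconn : ∀ i, (F i).Connected)
    (h2 : ∀ i j, ((F i) ⊔ (F j)).coe.IsAcyclic)
    (hcommon : ∃ t : W, ∀ i, t ∈ (F i).verts) :
    (⨆ i, F i).coe.IsTree := by
  classical
  obtain ⟨t, ht⟩ := hcommon
  -- pairwise acyclicity in the ambient vertex type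
  have hsupSC : ∀ i j : ι, (F i ⊔ F j).spanningCoe
      = (F i).spanningCoe ⊔ (F j).spanningCoe := by
    intro i j
    ext x y
    simp [Subgraph.spanningCoe]
  have hA : ∀ i j, ((F i).spanningCoe ⊔ (F j).spanningCoe).IsAcyclic := by
    intro i j
    rw [← hsupSC]
    exact acyclic_iff.mp (h2 i j)
  have hAi : ∀ i, (F i).spanningCoe.IsAcyclic := by
    intro i
    have := hA i i
    simpa using this
  -- canonical paths to `t`
  have hPex : ∀ i (x : W) (hx : x ∈ (F i).verts),
      ∃ p : (F i).spanningCoe.Walk x t, p.IsPath := by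
    intro i x hx
    obtain ⟨w⟩ := (hconn i).coe.preconnected ⟨x, hx⟩ ⟨t, ht i⟩
    have q := (w.map (coeHom (F i))).toPath
    exact ⟨q.1, q.2⟩
  choose P hP using hPex
  have hixex : ∀ a : (⨆ i, F i).verts, ∃ i, (a : W) ∈ (F i).verts := by
    intro a
    exact Set.mem_iUnion.mp (by simpa [Subgraph.verts_iSup] using a.2)
  choose ix hix using hixex
  -- coherence of canonical paths
  have L1 : ∀ (a : (⨆ i, F i).verts) (j : ι) (hj : (a : W) ∈ (F j).verts)
      (p : (F j).spanningCoe.Walk (a : W) t), p.IsPath →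
      p.length = (P (ix a) (a : W) (hix a)).length ∧
      p.getVert 1 = (P (ix a) (a : W) (hix a)).getVert 1 := by
    intro a j hj p hp
    have hle1 : (F j).spanningCoe ≤ (F j).spanningCoe ⊔ (F (ix a)).spanningCoe := le_sup_left
    have hle2 : (F (ix a)).spanningCoe ≤ (F j).spanningCoe ⊔ (F (ix a)).spanningCoe :=
      le_sup_right
    have h1 : (p.mapLe hle1).IsPath := hp.mapLe _
    have h2' : ((P (ix a) (a : W) (hix a)).mapLe hle2).IsPath := (hP _ _ _).mapLe _
    have heqP := isAcyclic_iff_path_unique.mp (hA j (ix a))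
      ⟨p.mapLe hle1, h1⟩ ⟨(P (ix a) (a : W) (hix a)).mapLe hle2, h2'⟩
    have heq : p.mapLe hle1 = (P (ix a) (a : W) (hix a)).mapLe hle2 :=
      congrArg Subtype.val heqP
    constructor
    · have := congrArg SimpleGraph.Walk.length heq
      simpa [SimpleGraph.Walk.mapLe, SimpleGraph.Walk.length_map] using this
    · have := congrArg (fun w => SimpleGraph.Walk.getVert w 1) heq
      simpa [SimpleGraph.Walk.mapLe, getVert_map, Hom.ofLE] using this
  -- the edge step lemma
  have L2 : ∀ (a b : (⨆ i, F i).verts), (⨆ i, F i).coe.Adj a b →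
      ((P (ix b) (b : W) (hix b)).length = (P (ix a) (a : W) (hix a)).length + 1 ∧
        (P (ix b) (b : W) (hix b)).getVert 1 = (a : W)) ∨
      ((P (ix a) (a : W) (hix a)).length = (P (ix b) (b : W) (hix b)).length + 1 ∧
        (P (ix a) (a : W) (hix a)).getVert 1 = (b : W)) := by
    intro a b hab
    have hab' : (⨆ i, F i).Adj (a : W) (b : W) := hab
    obtain ⟨j, hj⟩ := Subgraph.iSup_adj.mp hab'
    have ha : (a : W) ∈ (F j).verts := (F j).edge_vert hj
    have hb : (b : W) ∈ (F j).verts := (F j).edge_vert hj.symm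
    have hadj : (F j).spanningCoe.Adj (a : W) (b : W) := hj
    have hppath := hP j (a : W) ha
    by_cases hmem : (b : W) ∈ (P j (a : W) ha).support
    · right
      have pt : ((P j (a : W) ha).takeUntil _ hmem).IsPath := hppath.takeUntil _
      have pe : (SimpleGraph.Walk.cons hadj SimpleGraph.Walk.nil).IsPath := by
        simp [SimpleGraph.Walk.cons_isPath_iff, hadj.ne]
      have h1 : (P j (a : W) ha).takeUntil _ hmem
          = SimpleGraph.Walk.cons hadj SimpleGraph.Walk.nil :=
        congrArg Subtype.val (isAcyclic_iff_path_unique.mp (hAi j) ⟨_, pt⟩ ⟨_, pe⟩)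
      have hp2 : P j (a : W) ha
          = SimpleGraph.Walk.cons hadj ((P j (a : W) ha).dropUntil _ hmem) := by
        conv_lhs => rw [← SimpleGraph.Walk.take_spec (P j (a : W) ha) hmem]
        rw [h1]
        simp
      have hd := hppath.dropUntil hmem
      obtain ⟨hlenb, hvb⟩ := L1 b j hb ((P j (a : W) ha).dropUntil _ hmem) hd
      obtain ⟨hlena, hva⟩ := L1 a j ha (P j (a : W) ha) hppath
      constructor
      · rw [← hlena, ← hlenb]
        conv_lhs => rw [hp2]
        simp
      · rw [← hva]
        conv_lhs => rw [hp2]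
        simp [SimpleGraph.Walk.getVert_cons_succ]
    · left
      have hc : (SimpleGraph.Walk.cons hadj.symm (P j (a : W) ha)).IsPath := by
        rw [SimpleGraph.Walk.cons_isPath_iff]
        exact ⟨hppath, hmem⟩
      obtain ⟨hlen, hv⟩ := L1 b j hb (SimpleGraph.Walk.cons hadj.symm (P j (a : W) ha)) hc
      obtain ⟨hlena, hva⟩ := L1 a j ha (P j (a : W) ha) hppath
      constructor
      · rw [← hlen, ← hlena]
        simp
      · rw [← hv]
        simp [SimpleGraph.Walk.getVert_cons_succ]
  -- the height function
  set hgt : (⨆ i, F i).verts → ℕ := fun a => (P (ix a) (a : W) (hix a)).length with hgt_def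
  -- key claim: no cycle can start at a vertex of maximal height
  have key : ∀ (x : (⨆ i, F i).verts) (c : (⨆ i, F i).coe.Walk x x), c.IsCycle →
      (∀ y ∈ c.support, hgt y ≤ hgt x) → False := by
    intro x c hc hmax
    cases c with
    | nil => exact hc.ne_nil rfl
    | @cons _ m _ hadj q =>
      rw [SimpleGraph.Walk.cons_isCycle_iff] at hc
      obtain ⟨hq, hne⟩ := hc
      have hlen3 : 2 ≤ q.length := by
        have := (SimpleGraph.Walk.cons_isCycle_iff q hadj).mpr ⟨hq, hne⟩ |>.three_le_length
        simpa [SimpleGraph.Walk.length_cons] using this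
      have hnn : ¬ q.reverse.Nil := by
        rw [SimpleGraph.Walk.nil_iff_length_eq, SimpleGraph.Walk.length_reverse]
        omega
      set b := q.reverse.getVert 1 with hbdef
      have hbx : (⨆ i, F i).coe.Adj x b := q.reverse.adj_snd hnn
      have hqr := SimpleGraph.Walk.cons_tail_eq q.reverse hnn
      have hbedge : s(x, b) ∈ q.edges := by
        rw [← List.mem_reverse, ← SimpleGraph.Walk.edges_reverse, ← hqr]
        rw [SimpleGraph.Walk.edges_cons]; exact List.mem_cons.mpr (Or.inl rfl)
      have hbsup : b ∈ q.support := by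
        have : b ∈ q.reverse.support := by
          rw [← hqr]
          rw [SimpleGraph.Walk.support_cons]
          exact List.mem_cons_of_mem _ (SimpleGraph.Walk.start_mem_support _)
        rwa [SimpleGraph.Walk.support_reverse, List.mem_reverse] at this
      have hmb : m ≠ b := by
        intro hmb
        rw [← hmb] at hbedge
        exact hne hbedge
      have hmaxm : hgt m ≤ hgt x := hmax m (by simp [SimpleGraph.Walk.support_cons])
      have hmaxb : hgt b ≤ hgt x :=
        hmax b (by simp [SimpleGraph.Walk.support_cons, hbsup])
      have h2m := L2 x m hadj
      have h2b := L2 x b hbx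
      have pm : (P (ix x) (x : W) (hix x)).getVert 1 = (m : W) := by
        rcases h2m with ⟨h1, _⟩ | ⟨_, h2⟩
        · exfalso
          simp only [hgt_def] at hmaxm
          omega
        · exact h2
      have pb : (P (ix x) (x : W) (hix x)).getVert 1 = (b : W) := by
        rcases h2b with ⟨h1, _⟩ | ⟨_, h2⟩
        · exfalso
          simp only [hgt_def] at hmaxb
          omega
        · exact h2
      exact hmb (Subtype.val_injective (pm ▸ pb))
  have hacyclic : (⨆ i, F i).coe.IsAcyclic := by
    intro v c hc
    have hsne : c.support.toFinset.Nonempty :=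
      ⟨v, by simp [SimpleGraph.Walk.start_mem_support]⟩
    obtain ⟨x, hxs, hxmax⟩ := c.support.toFinset.exists_max_image hgt hsne
    rw [List.mem_toFinset] at hxs
    have hc' := hc.rotate hxs
    have hmem' : ∀ y, y ∈ (c.rotate x hxs).support → y ∈ c.support := by
      intro y hy
      rw [SimpleGraph.Walk.support_eq_cons] at hy
      rcases List.mem_cons.mp hy with rfl | hy
      · exact hxs
      · have hr := SimpleGraph.Walk.support_rotate c x hxs
        have : y ∈ c.support.tail := hr.mem_iff.mp hy
        exact List.mem_of_mem_tail this
    exact key x (c.rotate x hxs) hc'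
      (fun y hy => hxmax y (List.mem_toFinset.mpr (hmem' y hy)))
  have htU : t ∈ (⨆ i, F i).verts := by
    rw [Subgraph.verts_iSup]
    exact Set.mem_iUnion.mpr ⟨Classical.arbitrary ι, ht _⟩
  have hconn' : (⨆ i, F i).coe.Connected := by
    rw [connected_iff_exists_forall_reachable]
    refine ⟨⟨t, htU⟩, ?_⟩
    rintro ⟨v, hv⟩
    obtain ⟨i, hvi⟩ := Set.mem_iUnion.mp (by simpa [Subgraph.verts_iSup] using hv)
    have hr : (F i).coe.Reachable ⟨v, hvi⟩ ⟨t, ht i⟩ :=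
      (hconn i).coe.preconnected ⟨v, hvi⟩ ⟨t, ht i⟩
    have := hr.map (Subgraph.inclusion (le_iSup F i))
    exact this.symm
  exact ⟨hconn', hacyclic⟩
end

section
/- Let 𝐇 be a 2-acyclic family of regions of a graph H. If the union of three members H₁, H₂, H₃ of 𝐇 contains a cycle, then each two of these three regions have nonempty intersection. -/
open SimpleGraph

namespace Stmt2Aux

variable {W : Type*} {H : SimpleGraph W}

/-- The embedding of `S.coe` into `S.spanningCoe`. -/
def toSp (S : H.Subgraph) : S.coe →g S.spanningCoe where
  toFun := fun v => v.val
  map_rel' := fun {a b} h => h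

lemma toSp_inj (S : H.Subgraph) : Function.Injective (toSp S) :=
  Subtype.val_injective

lemma liftWalk {S : H.Subgraph} {x y : W} (w : S.spanningCoe.Walk x y) :
    ∀ (hx : x ∈ S.verts) (hy : y ∈ S.verts),
      ∃ w' : S.coe.Walk ⟨x, hx⟩ ⟨y, hy⟩, w'.map (toSp S) = w := by
  induction w with
  | nil => intro hx hy; exact ⟨Walk.nil, rfl⟩
  | @cons a b c h p ih =>
      intro hx hy
      obtain ⟨p', hp'⟩ := ih (S.edge_vert (S.adj_symm (show S.Adj a b from h))) hy
      refine ⟨Walk.cons (show S.coe.Adj ⟨a, hx⟩ ⟨b, _⟩ from h) p', ?_⟩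
      rw [Walk.map_cons, hp']
      rfl

lemma coe_acyclic_iff (S : H.Subgraph) :
    S.coe.IsAcyclic ↔ S.spanningCoe.IsAcyclic := by
  constructor
  · intro h v c hc
    cases c with
    | nil => exact hc.ne_nil rfl
    | cons h' p =>
        have hv : v ∈ S.verts := S.edge_vert h'
        obtain ⟨c', hc'⟩ := liftWalk (Walk.cons h' p) hv hv
        have : (c'.map (toSp S)).IsCycle := hc' ▸ hc
        exact h c' ((Walk.map_isCycle_iff_of_injective (toSp_inj S)).mp this)
  · intro h v c hc
    exact h (c.map (toSp S)) (hc.map (toSp_inj S))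

lemma exists_inf_walk {R : H.Subgraph} (hR : R.Connected) {z1 z2 : W}
    (h1 : z1 ∈ R.verts) (h2 : z2 ∈ R.verts) :
    Nonempty (R.spanningCoe.Walk z1 z2) := by
  have hreach : R.coe.Reachable ⟨z1, h1⟩ ⟨z2, h2⟩ := hR.coe ⟨z1, h1⟩ ⟨z2, h2⟩
  exact hreach.map (toSp R)

lemma project {P Q : H.Subgraph} (hR : (P ⊓ Q).Connected) {x y : W}
    (w : (P ⊔ Q).spanningCoe.Walk x y) :
    y ∈ P.verts →
      ((x ∈ P.verts → ∃ w' : P.spanningCoe.Walk x y,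
          ∀ e ∈ w'.edges, e ∈ w.edges ∨ e ∈ (P ⊓ Q).spanningCoe.edgeSet) ∧
       (x ∈ Q.verts → ∃ z, z ∈ (P ⊓ Q).verts ∧ ∃ w' : P.spanningCoe.Walk z y,
          ∀ e ∈ w'.edges, e ∈ w.edges ∨ e ∈ (P ⊓ Q).spanningCoe.edgeSet)) := by
  induction w with
  | nil =>
      intro hy
      constructor
      · intro _hx
        exact ⟨Walk.nil, by simp⟩
      · intro hx
        refine ⟨_, ?_, Walk.nil, by simp⟩
        rw [Subgraph.verts_inf]
        exact ⟨hy, hx⟩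
  | @cons a b c h p ih =>
      intro hy
      have hPQ : P.Adj a b ∨ Q.Adj a b := by
        simpa [Subgraph.sup_adj] using h
      have ih' := ih hy
      constructor
      · -- part 1 : a ∈ P.verts
        intro ha
        rcases hPQ with hp | hq
        · obtain ⟨w'', hw''⟩ := ih'.1 (P.edge_vert hp.symm)
          refine ⟨Walk.cons (show P.spanningCoe.Adj a b from hp) w'', ?_⟩
          intro e he
          rw [Walk.edges_cons] at he
          rcases List.mem_cons.mp he with rfl | he
          · left; rw [Walk.edges_cons]; exact List.mem_cons_self
          · rcases hw'' e he with h1 | h1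
            · left; rw [Walk.edges_cons]; exact List.mem_cons_of_mem _ h1
            · right; exact h1
        · have haR : a ∈ (P ⊓ Q).verts := by
            rw [Subgraph.verts_inf]; exact ⟨ha, Q.edge_vert hq⟩
          obtain ⟨z, hz, w'', hw''⟩ := ih'.2 (Q.edge_vert hq.symm)
          obtain ⟨q⟩ := exists_inf_walk hR haR hz
          have hqe : ∀ e ∈ q.edges, e ∈ P.spanningCoe.edgeSet := fun e he =>
            edgeSet_mono (Subgraph.spanningCoe_le_of_le inf_le_left)
              (q.edges_subset_edgeSet he)
          refine ⟨(q.transfer P.spanningCoe hqe).append w'', ?_⟩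
          intro e he
          rw [Walk.edges_append] at he
          rcases List.mem_append.mp he with he | he
          · right
            rw [Walk.edges_transfer] at he
            exact q.edges_subset_edgeSet he
          · rcases hw'' e he with h1 | h1
            · left; rw [Walk.edges_cons]; exact List.mem_cons_of_mem _ h1
            · right; exact h1
      · -- part 2 : a ∈ Q.verts
        intro ha
        rcases hPQ with hp | hq
        · have haR : a ∈ (P ⊓ Q).verts := by
            rw [Subgraph.verts_inf]; exact ⟨P.edge_vert hp, ha⟩
          obtain ⟨w'', hw''⟩ := ih'.1 (P.edge_vert hp.symm)
          refine ⟨a, haR, Walk.cons (show P.spanningCoe.Adj a b from hp) w'', ?_⟩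
          intro e he
          rw [Walk.edges_cons] at he
          rcases List.mem_cons.mp he with rfl | he
          · left; rw [Walk.edges_cons]; exact List.mem_cons_self
          · rcases hw'' e he with h1 | h1
            · left; rw [Walk.edges_cons]; exact List.mem_cons_of_mem _ h1
            · right; exact h1
        · obtain ⟨z, hz, w'', hw''⟩ := ih'.2 (Q.edge_vert hq.symm)
          refine ⟨z, hz, w'', ?_⟩
          intro e he
          rcases hw'' e he with h1 | h1
          · left; rw [Walk.edges_cons]; exact List.mem_cons_of_mem _ h1
          · right; exact h1

lemma keyL {P Q : H.Subgraph} (hP : P.spanningCoe.IsAcyclic)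
    (hQ : Q.spanningCoe.IsAcyclic) (hR : (P ⊓ Q).Connected) :
    (P ⊔ Q).spanningCoe.IsAcyclic := by
  intro u c hc
  by_cases hall : ∀ e ∈ c.edges, e ∈ Q.spanningCoe.edgeSet
  · exact hQ _ (hc.transfer hall)
  · push_neg at hall
    obtain ⟨e, he, heQ⟩ := hall
    have heG := c.edges_subset_edgeSet he
    revert he heQ heG
    induction e using Sym2.ind with
    | _ a b =>
      intro he heQ heG
      rw [mem_edgeSet] at heG
      have hq : ¬ Q.Adj a b := fun hq => heQ ((mem_edgeSet _).mpr hq)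
      have hp : P.Adj a b := by
        rcases (Subgraph.sup_adj).mp heG with h1 | h1
        · exact h1
        · exact absurd h1 hq
      have hrd := (adj_and_reachable_delete_edges_iff_exists_cycle.mpr
        ⟨u, c, hc, he⟩).2
      obtain ⟨w0⟩ := hrd
      have hsub : ∀ e' ∈ w0.edges, e' ∈ (P ⊔ Q).spanningCoe.edgeSet := fun e' h' =>
        edgeSet_mono sdiff_le (w0.edges_subset_edgeSet h')
      have hnotin : s(a, b) ∉ w0.edges := by
        intro hmem
        have h' := w0.edges_subset_edgeSet hmem
        rw [mem_edgeSet] at h'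
        simp [sdiff_adj, fromEdgeSet_adj, heG.ne] at h'
      set w := w0.transfer (P ⊔ Q).spanningCoe hsub with hw
      obtain ⟨w', hw'⟩ := (project hR w (P.edge_vert hp.symm)).1 (P.edge_vert hp)
      have hbr := (isAcyclic_iff_forall_adj_isBridge.mp hP)
        (show P.spanningCoe.Adj a b from hp)
      rw [isBridge_iff_adj_and_forall_walk_mem_edges] at hbr
      rcases hw' _ (hbr w') with h1 | h1
      · rw [hw, Walk.edges_transfer] at h1
        exact hnotin h1
      · rw [mem_edgeSet, Subgraph.spanningCoe_adj, Subgraph.inf_adj] at h1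
        exact hq h1.2

lemma pairwise (A B C : H.Subgraph) (hconnC : C.Connected)
    (hAC : (A ⊔ C).coe.IsAcyclic) (hBC : (B ⊔ C).coe.IsAcyclic)
    (hcyc : ¬ (A ⊔ B ⊔ C).coe.IsAcyclic) : (A.verts ∩ B.verts).Nonempty := by
  by_contra hdisj
  rw [Set.not_nonempty_iff_eq_empty] at hdisj
  have hnot : ∀ x, x ∈ A.verts → x ∈ B.verts → False := fun x hA hB =>
    Set.eq_empty_iff_forall_notMem.mp hdisj x ⟨hA, hB⟩
  have hinf : (A ⊔ C) ⊓ (B ⊔ C) = C := by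
    apply Subgraph.ext
    · ext x
      simp only [Subgraph.verts_inf, Subgraph.verts_sup, Set.mem_inter_iff,
        Set.mem_union]
      constructor
      · rintro ⟨hA | hC, hB | hC'⟩
        · exact (hnot x hA hB).elim
        · exact hC'
        · exact hC
        · exact hC'
      · intro hC; exact ⟨Or.inr hC, Or.inr hC⟩
    · funext a b
      apply propext
      simp only [Subgraph.inf_adj, Subgraph.sup_adj]
      constructor
      · rintro ⟨hA | hC, hB | hC'⟩
        · exact (hnot a (A.edge_vert hA) (B.edge_vert hB)).elim
        · exact hC'
        · exact hC
        · exact hC'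
      · intro hC; exact ⟨Or.inr hC, Or.inr hC⟩
  have hkey := keyL ((coe_acyclic_iff _).mp hAC) ((coe_acyclic_iff _).mp hBC)
    (by rw [hinf]; exact hconnC)
  have hsup : (A ⊔ C) ⊔ (B ⊔ C) = A ⊔ B ⊔ C := by
    rw [sup_sup_sup_comm, sup_idem]
  rw [hsup] at hkey
  exact hcyc ((coe_acyclic_iff _).mpr hkey)

end Stmt2Aux

/-- in a 2-acyclic family of regions, if the union of three members
contains a cycle, then each two of the three regions intersect. -/
theorem stmt2 {W ι : Type*} (H : SimpleGraph W) (F : ι → H.Subgraph)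
    (hconn : ∀ i, (F i).Connected)
    (h2 : ∀ i j, ((F i) ⊔ (F j)).coe.IsAcyclic)
    (i₁ i₂ i₃ : ι)
    (hcyc : ¬ (F i₁ ⊔ F i₂ ⊔ F i₃).coe.IsAcyclic) :
    ((F i₁).verts ∩ (F i₂).verts).Nonempty ∧
    ((F i₁).verts ∩ (F i₃).verts).Nonempty ∧
    ((F i₂).verts ∩ (F i₃).verts).Nonempty := by
  refine ⟨?_, ?_, ?_⟩
  · exact Stmt2Aux.pairwise (F i₁) (F i₂) (F i₃) (hconn i₃) (h2 i₁ i₃) (h2 i₂ i₃) hcyc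
  · apply Stmt2Aux.pairwise (F i₁) (F i₃) (F i₂) (hconn i₂) (h2 i₁ i₂) (h2 i₃ i₂)
    rw [sup_right_comm]
    exact hcyc
  · apply Stmt2Aux.pairwise (F i₂) (F i₃) (F i₁) (hconn i₁) (h2 i₂ i₁) (h2 i₃ i₁)
    rw [sup_comm (F i₂ ⊔ F i₃) (F i₁), ← sup_assoc]
    exact hcyc
end

section
/- Let 𝐇 be a family of regions of a graph H. Then 𝐇 is 3-acyclic if and only if 𝐇 is 2-acyclic and finitely Helly, i.e., every finite set of pairwise intersecting members of 𝐇 has a common vertex. -/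
open SimpleGraph

namespace Stmt3Aux

variable {W : Type*} {H : SimpleGraph W}

lemma mem_verts_of_walk {A : H.Subgraph} {u v : W} (p : A.spanningCoe.Walk u v)
    (hu : u ∈ A.verts) : ∀ x ∈ p.support, x ∈ A.verts := by
  induction p with
  | nil => intro x hx; rw [Walk.support_nil, List.mem_singleton] at hx; subst hx; exact hu
  | cons h p ih =>
      intro x hx
      rw [Walk.support_cons, List.mem_cons] at hx
      rcases hx with rfl | hx
      · exact hu
      · exact ih (A.edge_vert h.symm) x hx

lemma path_eq {G : SimpleGraph W} (hG : G.IsAcyclic) {u v : W} {p q : G.Walk u v}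
    (hp : p.IsPath) (hq : q.IsPath) : p = q :=
  congrArg Subtype.val (hG.path_unique ⟨p, hp⟩ ⟨q, hq⟩)

/-- The hom from the coe of a subgraph to its spanningCoe. -/
def toSpan (A : H.Subgraph) : A.coe →g A.spanningCoe where
  toFun := Subtype.val
  map_rel' := fun h => h

lemma toSpan_injective (A : H.Subgraph) : Function.Injective (toSpan A) :=
  Subtype.val_injective

/-- Lift a walk in the spanningCoe to the coe. -/
def liftWalk {A : H.Subgraph} : ∀ {u v : W} (p : A.spanningCoe.Walk u v)
    (hu : u ∈ A.verts) (hv : v ∈ A.verts), A.coe.Walk ⟨u, hu⟩ ⟨v, hv⟩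
  | _, _, Walk.nil, _, _ => Walk.nil
  | _, _, Walk.cons h p, hu, hv =>
      Walk.cons (by exact h) (liftWalk p (A.edge_vert h.symm) hv)

lemma liftWalk_map {A : H.Subgraph} : ∀ {u v : W} (p : A.spanningCoe.Walk u v)
    (hu : u ∈ A.verts) (hv : v ∈ A.verts), (liftWalk p hu hv).map (toSpan A) = p
  | _, _, Walk.nil, _, _ => rfl
  | _, _, Walk.cons h p, hu, hv => by
      simp only [liftWalk, Walk.map_cons, liftWalk_map]
      exact congrArg (Walk.cons h) (liftWalk_map p _ hv)

lemma coe_acyclic_iff_spanning (A : H.Subgraph) :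
    A.coe.IsAcyclic ↔ A.spanningCoe.IsAcyclic := by
  constructor
  · intro h v c hc
    cases c with
    | nil => exact hc.ne_nil rfl
    | cons hadj q =>
        have hv : v ∈ A.verts := A.edge_vert hadj
        set c := Walk.cons hadj q with hcdef
        have := liftWalk_map (A := A) c hv hv
        apply h (liftWalk c hv hv)
        rw [← Walk.map_isCycle_iff_of_injective (toSpan_injective A), this]
        exact hc
  · intro h v c hc
    exact h _ ((Walk.map_isCycle_iff_of_injective (toSpan_injective A)).2 hc)

variable {W : Type*} {H : SimpleGraph W}

lemma path_eq' {G : SimpleGraph W} (hG : G.IsAcyclic) {u v : W} {p q : G.Walk u v}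
    (hp : p.IsPath) (hq : q.IsPath) : p = q :=
  congrArg Subtype.val (hG.path_unique ⟨p, hp⟩ ⟨q, hq⟩)

@[simp] lemma sc_adj (A : H.Subgraph) (x y : W) : A.spanningCoe.Adj x y ↔ A.Adj x y := Iff.rfl

lemma acyclic_mono {G G' : SimpleGraph W} (h : G ≤ G') (h' : G'.IsAcyclic) : G.IsAcyclic :=
  fun v c hc =>
    h' (c.transfer G' (fun e he => edgeSet_mono h (c.edges_subset_edgeSet he)))
      (hc.transfer _)

/-- Transfer a walk along `≤`. -/
def trLe {G G' : SimpleGraph W} (h : G ≤ G') {u v : W} (p : G.Walk u v) : G'.Walk u v :=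
  p.transfer G' (fun e he => edgeSet_mono h (p.edges_subset_edgeSet he))

@[simp] lemma trLe_support {G G' : SimpleGraph W} (h : G ≤ G') {u v : W} (p : G.Walk u v) :
    (trLe h p).support = p.support := Walk.support_transfer _ _

@[simp] lemma trLe_length {G G' : SimpleGraph W} (h : G ≤ G') {u v : W} (p : G.Walk u v) :
    (trLe h p).length = p.length := Walk.length_transfer _ _

lemma trLe_isPath {G G' : SimpleGraph W} (h : G ≤ G') {u v : W} {p : G.Walk u v}
    (hp : p.IsPath) : (trLe h p).IsPath := hp.transfer _

lemma exists_spanning_path {A : H.Subgraph} (hA : A.Connected) {u v : W}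
    (hu : u ∈ A.verts) (hv : v ∈ A.verts) :
    ∃ p : A.spanningCoe.Walk u v, p.IsPath := by
  classical
  obtain ⟨w⟩ := hA ⟨u, hu⟩ ⟨v, hv⟩
  exact ⟨(w.map (toSpan A)).bypass, Walk.bypass_isPath _⟩

lemma isPath_append_of_inter {G : SimpleGraph W} {u v w : W} {p : G.Walk u v} {q : G.Walk v w}
    (hp : p.IsPath) (hq : q.IsPath)
    (hint : ∀ x, x ∈ p.support → x ∈ q.support → x = v) : (p.append q).IsPath := by
  rw [Walk.isPath_def, Walk.support_append, List.nodup_append]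
  refine ⟨hp.support_nodup, ?_, ?_⟩
  · have := hq.support_nodup
    rw [Walk.support_eq_cons] at this
    exact (List.nodup_cons.1 this).2
  · intro x hx _ hx' rfl
    have hxv : x = v := hint x hx (List.mem_of_mem_tail hx')
    subst hxv
    have := hq.support_nodup
    rw [Walk.support_eq_cons] at this
    exact (List.nodup_cons.1 this).1 hx'

lemma exists_prefix_first {G : SimpleGraph W} (s : Set W) :
    ∀ {u v : W} (p : G.Walk u v), v ∈ s →
    ∃ (m : W) (q : G.Walk u m) (r : G.Walk m v),
      m ∈ s ∧ p = q.append r ∧ ∀ x ∈ q.support, x ∈ s → x = m := by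
  intro u v p
  induction p with
  | nil => intro hv; exact ⟨_, Walk.nil, Walk.nil, hv, rfl, by simp⟩
  | @cons a b c h p ih =>
      intro hv
      by_cases ha : a ∈ s
      · exact ⟨a, Walk.nil, Walk.cons h p, ha, rfl, by simp⟩
      · obtain ⟨m, q, r, hm, hpq, hfirst⟩ := ih hv
        refine ⟨m, Walk.cons h q, r, hm, by rw [Walk.cons_append, ← hpq], ?_⟩
        intro x hx hxs
        rw [Walk.support_cons, List.mem_cons] at hx
        rcases hx with rfl | hx
        · exact absurd hxs ha
        · exact hfirst x hx hxs

lemma median {G : SimpleGraph W} (hG : G.IsAcyclic) {a b c : W}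
    (p : G.Walk a b) (q : G.Walk b c) (r : G.Walk a c)
    (hp : p.IsPath) (hq : q.IsPath) (hr : r.IsPath) :
    ∃ m, m ∈ p.support ∧ m ∈ q.support ∧ m ∈ r.support := by
  classical
  obtain ⟨m, p₁, p₂, hm, hpq, hfirst⟩ :=
    exists_prefix_first {x | x ∈ q.support} p q.start_mem_support
  have hmq : m ∈ q.support := hm
  have hp₁ : p₁.IsPath := by
    rw [hpq] at hp; exact hp.of_append_left
  have hdrop : (q.dropUntil m hmq).IsPath := hq.dropUntil hmq
  have hw : (p₁.append (q.dropUntil m hmq)).IsPath := by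
    apply isPath_append_of_inter hp₁ hdrop
    intro x hx hx'
    exact hfirst x hx (q.support_dropUntil_subset hmq hx')
  have heq : r = p₁.append (q.dropUntil m hmq) := path_eq' hG hr hw
  refine ⟨m, ?_, hmq, ?_⟩
  · rw [hpq]; exact Walk.subset_support_append_left _ _ p₁.end_mem_support
  · rw [heq]; exact Walk.subset_support_append_left _ _ p₁.end_mem_support

lemma support_dichotomy {G : SimpleGraph W} (hG : G.IsAcyclic) {x y t : W}
    (hxy : G.Adj x y) {p : G.Walk x t} {q : G.Walk y t} (hp : p.IsPath) (hq : q.IsPath) :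
    p.support = x :: q.support ∨ q.support = y :: p.support := by
  classical
  by_cases hy : y ∈ p.support
  · left
    have h1 : p.takeUntil y hy = Walk.cons hxy Walk.nil := by
      apply path_eq' hG (hp.takeUntil hy)
      simp [Walk.isPath_def, hxy.ne]
    have h2 : p.dropUntil y hy = q := path_eq' hG (hp.dropUntil hy) hq
    conv_lhs => rw [← Walk.take_spec p hy]
    rw [Walk.support_append, h1, h2]
    rw [Walk.support_cons, Walk.support_nil]
    rw [Walk.support_eq_cons q]
    simp
  · right
    have h2 : Walk.cons hxy.symm p = q := by
      apply path_eq' hG _ hq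
      exact hp.cons hy
    rw [← h2, Walk.support_cons]

lemma acyclic_of_level {G : SimpleGraph W} (d : W → ℕ) (par : W → W)
    (hedge : ∀ x y, G.Adj x y →
      (d x = d y + 1 ∧ par x = y) ∨ (d y = d x + 1 ∧ par y = x)) :
    G.IsAcyclic := by
  intro v c hc
  classical
  obtain ⟨x, hxmem', hxmax⟩ := Finset.exists_max_image c.support.toFinset d
    ⟨v, by simp [c.start_mem_support]⟩
  have hx : x ∈ c.support := by simpa using hxmem'
  have hmax : ∀ y ∈ c.support, d y ≤ d x := fun y hy => hxmax y (by simpa using hy)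
  set c' := c.rotate x hx with hc'def
  have hc' : c'.IsCycle := hc.rotate hx
  have hmem : ∀ y, y ∈ c'.support → y ∈ c.support := by
    intro y hy
    rw [Walk.support_eq_cons] at hy
    rcases List.mem_cons.1 hy with rfl | hy
    · exact hx
    · exact List.mem_of_mem_tail (((c.support_rotate x hx).mem_iff).1 hy)
  clear_value c'
  cases c' with
  | nil => exact hc'.ne_nil rfl
  | @cons _ b _ hadj q =>
    -- q : G.Walk b x, hadj : G.Adj x b
    have hqpath : q.IsPath := ((Walk.cons_isCycle_iff q hadj).1 hc').1
    have hqlen : 2 ≤ q.length := by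
      have h3 := hc'.three_le_length
      rw [Walk.length_cons] at h3
      omega
    have hqrevnotnil : ¬ q.reverse.Nil := by
      rw [Walk.not_nil_iff_lt_length, Walk.length_reverse]
      omega
    obtain ⟨a, hax, r, hqr⟩ := Walk.not_nil_iff.1 hqrevnotnil
    -- hax : G.Adj x a, r : G.Walk a b? no: q.reverse : Walk x b, = cons hax r, r : Walk a b
    have hqsup : q.support = r.support.reverse ++ [x] := by
      have : q.support.reverse = x :: r.support := by
        rw [← Walk.support_reverse, hqr, Walk.support_cons]
      calc q.support = q.support.reverse.reverse := by simp
        _ = (x :: r.support).reverse := by rw [this]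
        _ = r.support.reverse ++ [x] := by simp
    have hamem : a ∈ q.support := by
      rw [hqsup]
      simp [r.start_mem_support]
    have hbmem : b ∈ q.support := q.start_mem_support
    have hane : a ≠ b := by
      rintro rfl
      -- r : Walk a b = a, closed
      have hnodup : q.support.Nodup := hqpath.support_nodup
      rw [hqsup] at hnodup
      have hrnodup : r.support.Nodup := by
        have := (List.nodup_append.1 hnodup).1
        simpa using this
      cases r with
      | nil =>
        -- then q.length = 1, contradiction
        have : q.reverse.length = 1 := by rw [hqr]; simp
        rw [Walk.length_reverse] at this
        omega
      | @cons _ e _ h' r' =>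
        rw [Walk.support_cons] at hrnodup
        exact (List.nodup_cons.1 hrnodup).1 (by
          simpa using r'.end_mem_support)
    -- now apply hedge
    have hbsup : b ∈ c.support := hmem b (by simp [Walk.support_cons, hbmem])
    have hasup : a ∈ c.support := hmem a (by simp [Walk.support_cons, hamem])
    have h1 := hedge x b hadj
    have h2 := hedge x a hax
    have hb' := hmax b hbsup
    have ha' := hmax a hasup
    rcases h1 with ⟨hd1, hp1⟩ | ⟨hd1, _⟩
    · rcases h2 with ⟨hd2, hp2⟩ | ⟨hd2, _⟩
      · exact hane (hp2 ▸ hp1 ▸ rfl)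
      · omega
    · omega

lemma level_from_reps {G : SimpleGraph W} {t : W} (L : W → List W)
    (hrep : ∀ x y, G.Adj x y → ∃ (G' : SimpleGraph W) (p : G'.Walk x t) (q : G'.Walk y t),
      G'.IsAcyclic ∧ G'.Adj x y ∧ p.IsPath ∧ q.IsPath ∧ p.support = L x ∧ q.support = L y) :
    G.IsAcyclic := by
  apply acyclic_of_level (fun x => (L x).length) (fun x => (L x).tail.headD t)
  intro x y hxy
  obtain ⟨G', p, q, hac, hadj, hp, hq, hLx, hLy⟩ := hrep x y hxy
  rcases support_dichotomy hac hadj hp hq with h | h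
  · left
    constructor
    · show (L x).length = (L y).length + 1
      rw [← hLx, ← hLy, h, List.length_cons]
    · show (L x).tail.headD t = y
      rw [← hLx, h, List.tail_cons, Walk.support_eq_cons q, List.headD_cons]
  · right
    constructor
    · show (L y).length = (L x).length + 1
      rw [← hLy, ← hLx, h, List.length_cons]
    · show (L y).tail.headD t = x
      rw [← hLy, h, List.tail_cons, Walk.support_eq_cons p, List.headD_cons]

lemma caseA {A B C : H.Subgraph} (hA : A.Connected) (hB : B.Connected) (hC : C.Connected)
    (hAB : (A ⊔ B).spanningCoe.IsAcyclic) (hAC : (A ⊔ C).spanningCoe.IsAcyclic)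
    (hBC : (B ⊔ C).spanningCoe.IsAcyclic)
    {t : W} (htA : t ∈ A.verts) (htB : t ∈ B.verts) (htC : t ∈ C.verts) :
    (A ⊔ B ⊔ C).spanningCoe.IsAcyclic := by
  classical
  have hconn : ∀ D : H.Subgraph, D = A ∨ D = B ∨ D = C → D.Connected ∧ t ∈ D.verts := by
    rintro D (rfl | rfl | rfl) <;> exact ⟨by assumption, by assumption⟩
  have hBA : (B ⊔ A).spanningCoe.IsAcyclic := by rwa [sup_comm]
  have hCA : (C ⊔ A).spanningCoe.IsAcyclic := by rwa [sup_comm]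
  have hCB : (C ⊔ B).spanningCoe.IsAcyclic := by rwa [sup_comm]
  have hA1 : A.spanningCoe.IsAcyclic :=
    acyclic_mono (Subgraph.spanningCoe_le_of_le le_sup_left) hAB
  have hB1 : B.spanningCoe.IsAcyclic :=
    acyclic_mono (Subgraph.spanningCoe_le_of_le le_sup_right) hAB
  have hC1 : C.spanningCoe.IsAcyclic :=
    acyclic_mono (Subgraph.spanningCoe_le_of_le le_sup_right) hAC
  have hpair : ∀ D₁ D₂ : H.Subgraph, (D₁ = A ∨ D₁ = B ∨ D₁ = C) →
      (D₂ = A ∨ D₂ = B ∨ D₂ = C) → (D₁ ⊔ D₂).spanningCoe.IsAcyclic := by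
    rintro D₁ D₂ (rfl | rfl | rfl) (rfl | rfl | rfl) <;>
      first
        | assumption
        | (rw [sup_idem]; assumption)
  have hL : ∀ x : W, ∃ L : List W,
      ∀ D, (D = A ∨ D = B ∨ D = C) → x ∈ D.verts →
        ∃ p : D.spanningCoe.Walk x t, p.IsPath ∧ p.support = L := by
    intro x
    by_cases hx : ∃ D, (D = A ∨ D = B ∨ D = C) ∧ x ∈ D.verts
    · obtain ⟨D₀, hD₀, hxD₀⟩ := hx
      obtain ⟨p₀, hp₀⟩ := exists_spanning_path (hconn D₀ hD₀).1 hxD₀ (hconn D₀ hD₀).2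
      refine ⟨p₀.support, fun D hD hxD => ?_⟩
      obtain ⟨q, hqp⟩ := exists_spanning_path (hconn D hD).1 hxD (hconn D hD).2
      refine ⟨q, hqp, ?_⟩
      have heq := path_eq' (hpair D₀ D hD₀ hD)
        (trLe_isPath (Subgraph.spanningCoe_le_of_le le_sup_left) hp₀)
        (trLe_isPath (Subgraph.spanningCoe_le_of_le le_sup_right) hqp)
      have := congrArg Walk.support heq
      rw [trLe_support, trLe_support] at this
      exact this.symm
    · refine ⟨[], fun D hD hxD => absurd ⟨D, hD, hxD⟩ hx⟩
  choose L hLprop using hL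
  apply level_from_reps (t := t) L
  intro x y hxy
  have hadj : (A ⊔ B ⊔ C).Adj x y := hxy
  have hD : ∃ D, (D = A ∨ D = B ∨ D = C) ∧ D.Adj x y := by
    rcases Subgraph.sup_adj.1 hadj with h | h
    · rcases Subgraph.sup_adj.1 h with h' | h'
      · exact ⟨A, Or.inl rfl, h'⟩
      · exact ⟨B, Or.inr (Or.inl rfl), h'⟩
    · exact ⟨C, Or.inr (Or.inr rfl), h⟩
  obtain ⟨D, hD, hDadj⟩ := hD
  have hxD : x ∈ D.verts := D.edge_vert hDadj
  have hyD : y ∈ D.verts := D.edge_vert hDadj.symm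
  obtain ⟨p, hp, hps⟩ := hLprop x D hD hxD
  obtain ⟨q, hq, hqs⟩ := hLprop y D hD hyD
  have hDac : D.spanningCoe.IsAcyclic := by
    have := hpair D D hD hD
    rwa [sup_idem] at this
  exact ⟨D.spanningCoe, p, q, hDac, hDadj, hp, hq, hps, hqs⟩


lemma walk_side {G : SimpleGraph W} {s : Set W}
    (h : ∀ a b, G.Adj a b → (a ∈ s ↔ b ∈ s)) {u v : W} (p : G.Walk u v) :
    ∀ x ∈ p.support, (x ∈ s ↔ u ∈ s) := by
  induction p with
  | nil =>
      intro x hx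
      rw [Walk.support_nil, List.mem_singleton] at hx
      rw [hx]
  | @cons a b c hadj p ih =>
      intro x hx
      rw [Walk.support_cons, List.mem_cons] at hx
      rcases hx with rfl | hx
      · rfl
      · exact (ih x hx).trans (h a b hadj).symm

lemma caseB {A B C : H.Subgraph} (hA : A.Connected) (hB : B.Connected) (hC : C.Connected)
    (hAB : (A ⊔ B).spanningCoe.IsAcyclic) (hAC : (A ⊔ C).spanningCoe.IsAcyclic)
    (hdisj : ¬(B.verts ∩ C.verts).Nonempty)
    (hABn : (A.verts ∩ B.verts).Nonempty) (hACn : (A.verts ∩ C.verts).Nonempty) :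
    (A ⊔ B ⊔ C).spanningCoe.IsAcyclic := by
  classical
  obtain ⟨t, htA, htB⟩ := hABn
  have hABconn : (A ⊔ B).Connected :=
    Subgraph.connected_sup hA.preconnected hB.preconnected (by rw [Subgraph.verts_inf]; exact ⟨t, htA, htB⟩)
  have hACconn : (A ⊔ C).Connected :=
    Subgraph.connected_sup hA.preconnected hC.preconnected (by rw [Subgraph.verts_inf]; exact hACn)
  have htAB : t ∈ (A ⊔ B).verts := Or.inl htA
  have htAC : t ∈ (A ⊔ C).verts := Or.inl htA
  have hL : ∀ x : W, ∃ L : List W,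
      (x ∈ A.verts ∪ B.verts → ∃ p : (A ⊔ B).spanningCoe.Walk x t, p.IsPath ∧ p.support = L)
      ∧ (x ∈ C.verts → ∃ p : (A ⊔ C).spanningCoe.Walk x t, p.IsPath ∧ p.support = L) := by
    intro x
    by_cases hx : x ∈ A.verts ∪ B.verts
    · obtain ⟨p, hp⟩ := exists_spanning_path hABconn (show x ∈ (A ⊔ B).verts from hx) htAB
      refine ⟨p.support, fun _ => ⟨p, hp, rfl⟩, fun hxC => ?_⟩
      have hxA : x ∈ A.verts := by
        rcases hx with hxA | hxB
        · exact hxA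
        · exact absurd ⟨x, hxB, hxC⟩ hdisj
      obtain ⟨q, hq⟩ := exists_spanning_path hA hxA htA
      have heq := path_eq' hAB
        (trLe_isPath (Subgraph.spanningCoe_le_of_le le_sup_left) hq) hp
      refine ⟨trLe (Subgraph.spanningCoe_le_of_le le_sup_left) q,
        trLe_isPath _ hq, ?_⟩
      rw [trLe_support]
      have := congrArg Walk.support heq
      rw [trLe_support] at this
      exact this
    · by_cases hxC : x ∈ C.verts
      · obtain ⟨p, hp⟩ := exists_spanning_path hACconn
          (show x ∈ (A ⊔ C).verts from Or.inr hxC) htAC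
        exact ⟨p.support, fun hmem => absurd hmem hx, fun _ => ⟨p, hp, rfl⟩⟩
      · exact ⟨[], fun hmem => absurd hmem hx, fun hmem => absurd hmem hxC⟩
  choose L hL1 hL2 using hL
  apply level_from_reps (t := t) L
  intro x y hxy
  rcases Subgraph.sup_adj.1 (hxy : (A ⊔ B ⊔ C).Adj x y) with h | h
  · have hx' : x ∈ A.verts ∪ B.verts := (A ⊔ B).edge_vert h
    have hy' : y ∈ A.verts ∪ B.verts := (A ⊔ B).edge_vert h.symm
    obtain ⟨p, hp, hps⟩ := hL1 x hx'
    obtain ⟨q, hq, hqs⟩ := hL1 y hy'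
    exact ⟨(A ⊔ B).spanningCoe, p, q, hAB, h, hp, hq, hps, hqs⟩
  · have hx' : x ∈ C.verts := C.edge_vert h
    have hy' : y ∈ C.verts := C.edge_vert h.symm
    obtain ⟨p, hp, hps⟩ := hL2 x hx'
    obtain ⟨q, hq, hqs⟩ := hL2 y hy'
    exact ⟨(A ⊔ C).spanningCoe, p, q, hAC, Subgraph.sup_adj.2 (Or.inr h), hp, hq, hps, hqs⟩

lemma caseSep {A B C : H.Subgraph}
    (h1 : ¬(C.verts ∩ A.verts).Nonempty) (h2 : ¬(C.verts ∩ B.verts).Nonempty)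
    (hAB : (A ⊔ B).spanningCoe.IsAcyclic) (hC : C.spanningCoe.IsAcyclic) :
    (A ⊔ B ⊔ C).spanningCoe.IsAcyclic := by
  intro v c hc
  have hiff : ∀ a b, (A ⊔ B ⊔ C).spanningCoe.Adj a b → (a ∈ C.verts ↔ b ∈ C.verts) := by
    intro a b hab
    rcases Subgraph.sup_adj.1 (hab : (A ⊔ B ⊔ C).Adj a b) with h | h
    · rcases Subgraph.sup_adj.1 h with h' | h'
      · exact iff_of_false (fun hm => h1 ⟨a, hm, A.edge_vert h'⟩)
          (fun hm => h1 ⟨b, hm, A.edge_vert h'.symm⟩)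
      · exact iff_of_false (fun hm => h2 ⟨a, hm, B.edge_vert h'⟩)
          (fun hm => h2 ⟨b, hm, B.edge_vert h'.symm⟩)
    · exact iff_of_true (C.edge_vert h) (C.edge_vert h.symm)
  have hside := walk_side hiff c
  by_cases hv : v ∈ C.verts
  · have hedges : ∀ e ∈ c.edges, e ∈ C.spanningCoe.edgeSet := by
      intro e he
      induction e with
      | h a b =>
        have hadj : (A ⊔ B ⊔ C).Adj a b := c.edges_subset_edgeSet he
        have haC : a ∈ C.verts := (hside a (c.fst_mem_support_of_mem_edges he)).2 hv
        rcases Subgraph.sup_adj.1 hadj with h | h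
        · rcases Subgraph.sup_adj.1 h with h' | h'
          · exact absurd ⟨a, haC, A.edge_vert h'⟩ h1
          · exact absurd ⟨a, haC, B.edge_vert h'⟩ h2
        · exact h
    exact hC (c.transfer _ hedges) (hc.transfer _)
  · have hedges : ∀ e ∈ c.edges, e ∈ (A ⊔ B).spanningCoe.edgeSet := by
      intro e he
      induction e with
      | h a b =>
        have hadj : (A ⊔ B ⊔ C).Adj a b := c.edges_subset_edgeSet he
        have haC : a ∉ C.verts := fun hm =>
          hv ((hside a (c.fst_mem_support_of_mem_edges he)).1 hm)
        rcases Subgraph.sup_adj.1 hadj with h | h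
        · exact h
        · exact absurd (C.edge_vert h) haC
    exact hAB (c.transfer _ hedges) (hc.transfer _)

lemma core {A B C : H.Subgraph} (hA : A.Connected) (hB : B.Connected) (hC : C.Connected)
    (hAB : (A ⊔ B).spanningCoe.IsAcyclic) (hAC : (A ⊔ C).spanningCoe.IsAcyclic)
    (hBC : (B ⊔ C).spanningCoe.IsAcyclic)
    (helly : (A.verts ∩ B.verts).Nonempty → (A.verts ∩ C.verts).Nonempty →
      (B.verts ∩ C.verts).Nonempty → ∃ t, t ∈ A.verts ∧ t ∈ B.verts ∧ t ∈ C.verts) :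
    (A ⊔ B ⊔ C).spanningCoe.IsAcyclic := by
  classical
  have hA1 : A.spanningCoe.IsAcyclic :=
    acyclic_mono (Subgraph.spanningCoe_le_of_le le_sup_left) hAB
  have hB1 : B.spanningCoe.IsAcyclic :=
    acyclic_mono (Subgraph.spanningCoe_le_of_le le_sup_right) hAB
  have hC1 : C.spanningCoe.IsAcyclic :=
    acyclic_mono (Subgraph.spanningCoe_le_of_le le_sup_right) hAC
  have hBA : (B ⊔ A).spanningCoe.IsAcyclic := by rwa [sup_comm] at hAB
  have hCA : (C ⊔ A).spanningCoe.IsAcyclic := by rwa [sup_comm] at hAC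
  have hCB : (C ⊔ B).spanningCoe.IsAcyclic := by rwa [sup_comm] at hBC
  by_cases h1 : (A.verts ∩ B.verts).Nonempty
  · by_cases h2 : (A.verts ∩ C.verts).Nonempty
    · by_cases h3 : (B.verts ∩ C.verts).Nonempty
      · obtain ⟨t, htA, htB, htC⟩ := helly h1 h2 h3
        exact caseA hA hB hC hAB hAC hBC htA htB htC
      · exact caseB hA hB hC hAB hAC h3 h1 h2
    · by_cases h3 : (B.verts ∩ C.verts).Nonempty
      · have := caseB hB hA hC hBA hBC h2 (by rwa [Set.inter_comm]) h3
        rwa [sup_comm B A] at this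
      · exact caseSep (by rwa [Set.inter_comm]) (by rwa [Set.inter_comm]) hAB hC1
  · by_cases h3 : (B.verts ∩ C.verts).Nonempty
    · by_cases h2 : (A.verts ∩ C.verts).Nonempty
      · have := caseB hC hA hB hCA hCB h1 (by rwa [Set.inter_comm]) (by rwa [Set.inter_comm])
        rwa [sup_comm C A, sup_right_comm] at this
      · have := caseSep (A := B) (B := C) (C := A) h1 h2 hBC hA1
        rwa [sup_comm (B ⊔ C) A, ← sup_assoc] at this
    · by_cases h2 : (A.verts ∩ C.verts).Nonempty
      · have := caseSep (A := A) (B := C) (C := B) (by rwa [Set.inter_comm]) h3 hAC hB1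
        rwa [sup_right_comm] at this
      · exact caseSep (by rwa [Set.inter_comm]) (by rwa [Set.inter_comm]) hAB hC1
lemma tripleHelly {A B C : H.Subgraph} (hA : A.Connected) (hB : B.Connected)
    (hC : C.Connected) (hac : (A ⊔ B ⊔ C).spanningCoe.IsAcyclic)
    (h1 : (A.verts ∩ B.verts).Nonempty) (h2 : (A.verts ∩ C.verts).Nonempty)
    (h3 : (B.verts ∩ C.verts).Nonempty) :
    ∃ t, t ∈ A.verts ∧ t ∈ B.verts ∧ t ∈ C.verts := by
  obtain ⟨a, haA, haB⟩ := h1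
  obtain ⟨b, hbB, hbC⟩ := h3
  obtain ⟨c0, hcA, hcC⟩ := h2
  obtain ⟨p, hp⟩ := exists_spanning_path hB haB hbB
  obtain ⟨q, hq⟩ := exists_spanning_path hC hbC hcC
  obtain ⟨r, hr⟩ := exists_spanning_path hA haA hcA
  have leA : A.spanningCoe ≤ (A ⊔ B ⊔ C).spanningCoe :=
    Subgraph.spanningCoe_le_of_le (le_trans le_sup_left le_sup_left)
  have leB : B.spanningCoe ≤ (A ⊔ B ⊔ C).spanningCoe :=
    Subgraph.spanningCoe_le_of_le (le_trans le_sup_right le_sup_left)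
  have leC : C.spanningCoe ≤ (A ⊔ B ⊔ C).spanningCoe :=
    Subgraph.spanningCoe_le_of_le le_sup_right
  obtain ⟨m, hm1, hm2, hm3⟩ := median hac (trLe leB p) (trLe leC q) (trLe leA r)
    (trLe_isPath _ hp) (trLe_isPath _ hq) (trLe_isPath _ hr)
  rw [trLe_support] at hm1 hm2 hm3
  exact ⟨m, mem_verts_of_walk r haA m hm3, mem_verts_of_walk p haB m hm1,
    mem_verts_of_walk q hbC m hm2⟩

def IsSubtree (G : SimpleGraph W) (s : Set W) : Prop :=
  s.Nonempty ∧ ∀ u ∈ s, ∀ v ∈ s, ∃ p : G.Walk u v, p.IsPath ∧ ∀ x ∈ p.support, x ∈ s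

lemma subtree_inter {G : SimpleGraph W} (hG : G.IsAcyclic) {s t : Set W} (hs : IsSubtree G s)
    (ht : IsSubtree G t) (hst : (s ∩ t).Nonempty) : IsSubtree G (s ∩ t) := by
  refine ⟨hst, ?_⟩
  rintro u ⟨hus, hut⟩ v ⟨hvs, hvt⟩
  obtain ⟨p, hp, hps⟩ := hs.2 u hus v hvs
  obtain ⟨q, hq, hqt⟩ := ht.2 u hut v hvt
  have hpq : p = q := path_eq' hG hp hq
  subst hpq
  exact ⟨p, hp, fun x hx => ⟨hps x hx, hqt x hx⟩⟩

lemma subtree_triple {G : SimpleGraph W} (hG : G.IsAcyclic) {s t r : Set W}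
    (hs : IsSubtree G s) (ht : IsSubtree G t) (hr : IsSubtree G r)
    (hst : (s ∩ t).Nonempty) (htr : (t ∩ r).Nonempty) (hsr : (s ∩ r).Nonempty) :
    (s ∩ t ∩ r).Nonempty := by
  obtain ⟨a, has, hat⟩ := hst
  obtain ⟨b, hbt, hbr⟩ := htr
  obtain ⟨c, hcs, hcr⟩ := hsr
  obtain ⟨p, hp, hpt⟩ := ht.2 a hat b hbt
  obtain ⟨q, hq, hqr⟩ := hr.2 b hbr c hcr
  obtain ⟨rr, hrr, hrs⟩ := hs.2 a has c hcs
  obtain ⟨m, hm1, hm2, hm3⟩ := median hG p q rr hp hq hrr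
  exact ⟨m, ⟨⟨hrs m hm3, hpt m hm1⟩, hqr m hm2⟩⟩

lemma helly_list {G : SimpleGraph W} (hG : G.IsAcyclic) :
    ∀ (n : ℕ) (l : List (Set W)), l.length ≤ n → (∀ s ∈ l, IsSubtree G s) →
    (∀ s ∈ l, ∀ t ∈ l, (s ∩ t).Nonempty) → l ≠ [] → ∃ x, ∀ s ∈ l, x ∈ s := by
  intro n
  induction n with
  | zero =>
      intro l hl _ _ hne
      cases l with
      | nil => exact absurd rfl hne
      | cons s l => simp at hl
  | succ n ih =>
      intro l hl hsub hpair hne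
      cases l with
      | nil => exact absurd rfl hne
      | cons s l' =>
        cases l' with
        | nil =>
            obtain ⟨x, hx⟩ := (hsub s (by simp)).1
            refine ⟨x, ?_⟩
            intro t ht
            rw [List.mem_singleton] at ht
            subst ht
            exact hx
        | cons t rest =>
            have hs : IsSubtree G s := hsub s (by simp)
            have ht : IsSubtree G t := hsub t (by simp)
            have hst : (s ∩ t).Nonempty := hpair s (by simp) t (by simp)
            obtain ⟨x, hx⟩ := ih ((s ∩ t) :: rest) (by simp at hl ⊢; omega)
              (by
                intro u hu
                rcases List.mem_cons.1 hu with rfl | hu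
                · exact subtree_inter hG hs ht hst
                · exact hsub u (by simp [hu]))
              (by
                intro u hu w hw
                rcases List.mem_cons.1 hu with rfl | hu <;>
                  rcases List.mem_cons.1 hw with rfl | hw
                · rwa [Set.inter_self]
                · exact subtree_triple hG hs ht (hsub w (by simp [hw])) hst
                    (hpair t (by simp) w (by simp [hw]))
                    (hpair s (by simp) w (by simp [hw]))
                · rw [Set.inter_comm]
                  exact subtree_triple hG hs ht (hsub u (by simp [hu])) hst
                    (hpair t (by simp) u (by simp [hu]))
                    (hpair s (by simp) u (by simp [hu]))
                · exact hpair u (by simp [hu]) w (by simp [hw]))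
              (by simp)
            have hxst : x ∈ s ∩ t := hx (s ∩ t) (by simp)
            refine ⟨x, ?_⟩
            intro u hu
            rcases List.mem_cons.1 hu with rfl | hu
            · exact hxst.1
            · rcases List.mem_cons.1 hu with rfl | hu
              · exact hxst.2
              · exact hx u (by simp [hu])
lemma pair_eq {ι : Type*} [DecidableEq ι] (F : ι → H.Subgraph) (a b : ι) :
    (⨆ i ∈ ({a, b} : Finset ι), F i) = F a ⊔ F b := by
  rw [Finset.iSup_insert, Finset.iSup_singleton]

lemma triple_eq {ι : Type*} [DecidableEq ι] (F : ι → H.Subgraph) (a b c : ι) :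
    (⨆ i ∈ ({a, b, c} : Finset ι), F i) = F a ⊔ F b ⊔ F c := by
  rw [Finset.iSup_insert, Finset.iSup_insert, Finset.iSup_singleton, sup_assoc]

end Stmt3Aux

open Stmt3Aux

/-- A family of subgraphs is `r`-acyclic if every union of at most `r` members is acyclic. -/
def FamAcyclic {W ι : Type*} (H : SimpleGraph W) (F : ι → H.Subgraph) (r : ℕ) : Prop :=
  ∀ S : Finset ι, S.card ≤ r → (⨆ i ∈ S, F i).coe.IsAcyclic

/-- A family is finitely Helly if every (nonempty) finite set of pairwise intersecting
members has a common vertex. -/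
def FinHelly {W ι : Type*} (H : SimpleGraph W) (F : ι → H.Subgraph) : Prop :=
  ∀ S : Finset ι, S.Nonempty →
    (∀ i ∈ S, ∀ j ∈ S, ((F i).verts ∩ (F j).verts).Nonempty) →
    ∃ t : W, ∀ i ∈ S, t ∈ (F i).verts

/-- a family of regions is 3-acyclic iff it is 2-acyclic and finitely Helly. -/
theorem stmt3 {W ι : Type*} (H : SimpleGraph W) (F : ι → H.Subgraph)
    (hconn : ∀ i, (F i).Connected) :
    FamAcyclic H F 3 ↔ (FamAcyclic H F 2 ∧ FinHelly H F) := by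
  classical
  have hcard2 : ∀ a b : ι, ({a, b} : Finset ι).card ≤ 2 := by
    intro a b
    apply le_trans (Finset.card_insert_le _ _)
    simp
  have hcard3 : ∀ a b c : ι, ({a, b, c} : Finset ι).card ≤ 3 := by
    intro a b c
    apply le_trans (Finset.card_insert_le _ _)
    have := hcard2 b c
    omega
  constructor
  · intro h3
    have h2 : FamAcyclic H F 2 := fun S hS => h3 S (le_trans hS (by norm_num))
    have pairAc : ∀ a b : ι, (F a ⊔ F b).spanningCoe.IsAcyclic := by
      intro a b
      have := h2 {a, b} (hcard2 a b)
      rw [pair_eq] at this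
      exact (coe_acyclic_iff_spanning _).1 this
    refine ⟨h2, ?_⟩
    intro S hSne hSpair
    obtain ⟨i0, hi0⟩ := hSne
    have hGac : (F i0).spanningCoe.IsAcyclic := by
      have := h3 {i0} (by simp)
      rw [Finset.iSup_singleton] at this
      exact (coe_acyclic_iff_spanning _).1 this
    set l := S.toList.map (fun i => (F i0).verts ∩ (F i).verts) with hl
    have hmem : ∀ s ∈ l, ∃ i ∈ S, s = (F i0).verts ∩ (F i).verts := by
      intro s hs
      simp only [hl, List.mem_map] at hs
      obtain ⟨i, hi, rfl⟩ := hs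
      exact ⟨i, Finset.mem_toList.1 hi, rfl⟩
    have hsub : ∀ i ∈ S, IsSubtree (F i0).spanningCoe ((F i0).verts ∩ (F i).verts) := by
      intro i hi
      refine ⟨hSpair i0 hi0 i hi, ?_⟩
      rintro u ⟨hu0, hui⟩ v ⟨hv0, hvi⟩
      obtain ⟨p, hp⟩ := exists_spanning_path (hconn i0) hu0 hv0
      obtain ⟨q, hq⟩ := exists_spanning_path (hconn i) hui hvi
      have heq := path_eq' (pairAc i0 i)
        (trLe_isPath (Subgraph.spanningCoe_le_of_le le_sup_left) hp)
        (trLe_isPath (Subgraph.spanningCoe_le_of_le le_sup_right) hq)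
      have hsupp : p.support = q.support := by
        have := congrArg Walk.support heq
        rw [trLe_support, trLe_support] at this
        exact this
      refine ⟨p, hp, ?_⟩
      intro x hx
      exact ⟨mem_verts_of_walk p hu0 x hx,
        mem_verts_of_walk q hui x (hsupp ▸ hx)⟩
    have hpairS : ∀ i ∈ S, ∀ j ∈ S,
        (((F i0).verts ∩ (F i).verts) ∩ ((F i0).verts ∩ (F j).verts)).Nonempty := by
      intro i hi j hj
      have hac3 : ((F i0) ⊔ (F i) ⊔ (F j)).spanningCoe.IsAcyclic := by
        have := h3 {i0, i, j} (hcard3 i0 i j)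
        rw [triple_eq] at this
        exact (coe_acyclic_iff_spanning _).1 this
      obtain ⟨t, ht0, hti, htj⟩ := tripleHelly (hconn i0) (hconn i) (hconn j) hac3
        (hSpair i0 hi0 i hi) (hSpair i0 hi0 j hj) (hSpair i hi j hj)
      exact ⟨t, ⟨ht0, hti⟩, ht0, htj⟩
    have hmem0 : (F i0).verts ∩ (F i0).verts ∈ l := by
      simp only [hl, List.mem_map]
      exact ⟨i0, Finset.mem_toList.2 hi0, rfl⟩
    obtain ⟨x, hx⟩ := helly_list hGac l.length l le_rfl
      (fun s hs => by obtain ⟨i, hi, rfl⟩ := hmem s hs; exact hsub i hi)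
      (fun s hs t ht => by
        obtain ⟨i, hi, rfl⟩ := hmem s hs
        obtain ⟨j, hj, rfl⟩ := hmem t ht
        exact hpairS i hi j hj)
      (List.ne_nil_of_mem hmem0)
    refine ⟨x, ?_⟩
    intro i hi
    have hmemi : (F i0).verts ∩ (F i).verts ∈ l := by
      simp only [hl, List.mem_map]
      exact ⟨i, Finset.mem_toList.2 hi, rfl⟩
    exact (hx _ hmemi).2
  · rintro ⟨h2, hH⟩
    have pairAc : ∀ a b : ι, (F a ⊔ F b).spanningCoe.IsAcyclic := by
      intro a b
      have := h2 {a, b} (hcard2 a b)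
      rw [pair_eq] at this
      exact (coe_acyclic_iff_spanning _).1 this
    intro S hS
    by_cases hc : S.card ≤ 2
    · exact h2 S hc
    · have hc3 : S.card = 3 := le_antisymm hS (by omega)
      obtain ⟨a, b, c, hab, hac, hbc, rfl⟩ := Finset.card_eq_three.1 hc3
      rw [triple_eq, coe_acyclic_iff_spanning]
      apply core (hconn a) (hconn b) (hconn c) (pairAc a b) (pairAc a c) (pairAc b c)
      intro hab' hac' hbc'
      have hself : ∀ k : ι, ((F k).verts ∩ (F k).verts).Nonempty := by
        intro k
        rw [Set.inter_self]
        exact (hconn k).nonempty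
      have key : ∀ i ∈ ({a, b, c} : Finset ι), ∀ j ∈ ({a, b, c} : Finset ι),
          ((F i).verts ∩ (F j).verts).Nonempty := by
        intro i hi j hj
        simp only [Finset.mem_insert, Finset.mem_singleton] at hi hj
        rcases hi with rfl | rfl | rfl <;> rcases hj with rfl | rfl | rfl <;>
          first
            | exact hself _
            | assumption
            | (rw [Set.inter_comm]; assumption)
      obtain ⟨t, ht⟩ := hH {a, b, c} ⟨a, by simp⟩ key
      exact ⟨t, ht a (by simp), ht b (by simp), ht c (by simp)⟩
end

section
/- Let 𝐇 be a 2-acyclic family of regions of a graph H. Then 𝐇 is finitely Helly if and only if every three pairwise intersecting members of 𝐇 have a common vertex. -/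
open SimpleGraph

namespace Stmt4Aux

variable {W : Type*} {H : SimpleGraph W}

open SimpleGraph.Walk

/-- Acyclicity is antitone for subgraphs. -/
lemma acyclic_mono {A B : H.Subgraph} (h : A ≤ B) (hB : B.coe.IsAcyclic) :
    A.coe.IsAcyclic := by
  intro v c hc
  exact hB (c.map (Subgraph.inclusion h))
    (hc.map (Subgraph.inclusion.injective h))

/-- Turn an `H`-walk whose vertices and edges lie in a subgraph `X` into a walk in `X.coe`. -/
def toCoeWalk {X : H.Subgraph} : ∀ {u v : W} (w : H.Walk u v),
    (∀ x ∈ w.support, x ∈ X.verts) → (∀ e ∈ w.edges, e ∈ X.edgeSet) →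
    ∀ (hu : u ∈ X.verts) (hv : v ∈ X.verts), X.coe.Walk ⟨u, hu⟩ ⟨v, hv⟩
  | _, _, Walk.nil, _, _, _, _ => Walk.nil
  | u, v, @Walk.cons _ _ _ b _ h p, hs, he, hu, hv =>
      have hb : b ∈ X.verts := hs _ (by simp)
      Walk.cons (show X.coe.Adj ⟨u, hu⟩ ⟨b, hb⟩ from
          Subgraph.mem_edgeSet.mp (he _ (by simp)))
        (toCoeWalk p (fun x hx => hs x (by simp [hx])) (fun e hee => he e (by simp [hee]))
          hb hv)

lemma support_toCoeWalk {X : H.Subgraph} {u v : W} (w : H.Walk u v) :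
    ∀ (hs : ∀ x ∈ w.support, x ∈ X.verts) (he : ∀ e ∈ w.edges, e ∈ X.edgeSet)
    (hu : u ∈ X.verts) (hv : v ∈ X.verts),
    (toCoeWalk w hs he hu hv).support.map Subtype.val = w.support := by
  induction w with
  | nil => intros; simp [toCoeWalk]
  | cons h p ih => intros; simp [toCoeWalk, ih]

lemma edges_toCoeWalk {X : H.Subgraph} {u v : W} (w : H.Walk u v) :
    ∀ (hs : ∀ x ∈ w.support, x ∈ X.verts) (he : ∀ e ∈ w.edges, e ∈ X.edgeSet)
    (hu : u ∈ X.verts) (hv : v ∈ X.verts),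
    (toCoeWalk w hs he hu hv).edges.map (Sym2.map Subtype.val) = w.edges := by
  induction w with
  | nil => intros; simp [toCoeWalk]
  | cons h p ih => intros; simp [toCoeWalk, ih]

lemma isPath_toCoeWalk {X : H.Subgraph} {u v : W} {w : H.Walk u v}
    (hw : w.IsPath) (hs : ∀ x ∈ w.support, x ∈ X.verts) (he : ∀ e ∈ w.edges, e ∈ X.edgeSet)
    (hu : u ∈ X.verts) (hv : v ∈ X.verts) :
    (toCoeWalk w hs he hu hv).IsPath := by
  apply Walk.IsPath.mk'
  have := hw.support_nodup
  rw [← support_toCoeWalk w hs he hu hv] at this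
  exact this.of_map _



lemma exists_pathIn {X : H.Subgraph} (hX : X.Connected) {u v : W}
    (hu : u ∈ X.verts) (hv : v ∈ X.verts) :
    ∃ w : H.Walk u v, w.IsPath ∧ (∀ x ∈ w.support, x ∈ X.verts) ∧
      (∀ e ∈ w.edges, e ∈ X.edgeSet) := by
  classical
  obtain ⟨p⟩ := hX.coe.preconnected ⟨u, hu⟩ ⟨v, hv⟩
  refine ⟨(p.toPath.val.map X.hom).copy (show X.hom ⟨u, hu⟩ = u from rfl)
    (show X.hom ⟨v, hv⟩ = v from rfl), ?_, ?_, ?_⟩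
  · rw [Walk.isPath_copy]
    exact Walk.map_isPath_of_injective Subgraph.hom_injective p.toPath.2
  · intro x hx
    rw [Walk.support_copy, Walk.support_map, List.mem_map] at hx
    obtain ⟨y, _, rfl⟩ := hx
    exact y.2
  · intro e he
    rw [Walk.edges_copy, Walk.edges_map, List.mem_map] at he
    obtain ⟨e', he', rfl⟩ := he
    have : e' ∈ X.coe.edgeSet := Walk.edges_subset_edgeSet _ he'
    induction e' using Sym2.ind with
    | _ x y =>
      rw [SimpleGraph.mem_edgeSet] at this
      exact Subgraph.mem_edgeSet.mpr (by simpa using this)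

lemma eq_of_paths {X : H.Subgraph} (hX : X.coe.IsAcyclic) {u v : W}
    {w₁ w₂ : H.Walk u v} (h₁ : w₁.IsPath) (h₂ : w₂.IsPath)
    (hs₁ : ∀ x ∈ w₁.support, x ∈ X.verts) (he₁ : ∀ e ∈ w₁.edges, e ∈ X.edgeSet)
    (hs₂ : ∀ x ∈ w₂.support, x ∈ X.verts) (he₂ : ∀ e ∈ w₂.edges, e ∈ X.edgeSet)
    (hu : u ∈ X.verts) (hv : v ∈ X.verts) :
    w₁.support = w₂.support ∧ w₁.edges = w₂.edges := by
  have hpq := hX.path_unique ⟨toCoeWalk w₁ hs₁ he₁ hu hv, isPath_toCoeWalk h₁ hs₁ he₁ hu hv⟩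
    ⟨toCoeWalk w₂ hs₂ he₂ hu hv, isPath_toCoeWalk h₂ hs₂ he₂ hu hv⟩
  have hpq' : toCoeWalk w₁ hs₁ he₁ hu hv = toCoeWalk w₂ hs₂ he₂ hu hv :=
    congrArg Subtype.val hpq
  constructor
  · rw [← support_toCoeWalk w₁ hs₁ he₁ hu hv, ← support_toCoeWalk w₂ hs₂ he₂ hu hv, hpq']
  · rw [← edges_toCoeWalk w₁ hs₁ he₁ hu hv, ← edges_toCoeWalk w₂ hs₂ he₂ hu hv, hpq']

lemma exists_common_path {A B : H.Subgraph} (hA : A.Connected) (hB : B.Connected)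
    (hacyc : (A ⊔ B).coe.IsAcyclic) {u v : W}
    (huA : u ∈ A.verts) (huB : u ∈ B.verts) (hvA : v ∈ A.verts) (hvB : v ∈ B.verts) :
    ∃ w : H.Walk u v, w.IsPath ∧ (∀ x ∈ w.support, x ∈ A.verts ∧ x ∈ B.verts) ∧
      (∀ e ∈ w.edges, e ∈ A.edgeSet ∧ e ∈ B.edgeSet) := by
  obtain ⟨wa, hpa, hsa, hea⟩ := exists_pathIn hA huA hvA
  obtain ⟨wb, hpb, hsb, heb⟩ := exists_pathIn hB huB hvB
  have hle₁ : A ≤ A ⊔ B := le_sup_left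
  have hle₂ : B ≤ A ⊔ B := le_sup_right
  obtain ⟨hsupp, hedg⟩ := eq_of_paths hacyc hpa hpb
    (fun x hx => hle₁.1 (hsa x hx)) (fun e he => Subgraph.edgeSet_mono hle₁ (hea e he))
    (fun x hx => hle₂.1 (hsb x hx)) (fun e he => Subgraph.edgeSet_mono hle₂ (heb e he))
    (hle₁.1 huA) (hle₁.1 hvA)
  exact ⟨wa, hpa, fun x hx => ⟨hsa x hx, hsb x (hsupp ▸ hx)⟩,
    fun e he => ⟨hea e he, heb e (hedg ▸ he)⟩⟩


/-- Split a walk at the first vertex belonging to a set `S`. -/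
lemma exists_prefix_until (S : Set W) : ∀ {u v : W} (P : H.Walk u v), v ∈ S →
    ∃ (x : W) (_ : x ∈ S) (P₁ : H.Walk u x) (P₂ : H.Walk x v),
      P = P₁.append P₂ ∧ (∀ y ∈ P₁.support, y ∈ S → y = x) := by
  intro u v P
  induction P with
  | nil =>
    intro hv
    exact ⟨_, hv, Walk.nil, Walk.nil, rfl, by intro y hy _; simpa using hy⟩
  | @cons u b v h P ih =>
    intro hv
    by_cases hu : u ∈ S
    · exact ⟨u, hu, Walk.nil, Walk.cons h P, rfl, by simp⟩
    · obtain ⟨x, hx, P₁, P₂, heq, hprop⟩ := ih hv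
      refine ⟨x, hx, Walk.cons h P₁, P₂, by rw [heq]; rfl, ?_⟩
      intro y hy hyS
      rw [Walk.support_cons] at hy
      rcases List.mem_cons.mp hy with rfl | hy
      · exact absurd hyS hu
      · exact hprop y hy hyS

/-- The median vertex of three paths in an acyclic subgraph. -/
lemma median {X : H.Subgraph} (hX : X.coe.IsAcyclic) {p q s : W}
    (P : H.Walk p q) (Q : H.Walk p s) (R : H.Walk q s)
    (hP : P.IsPath) (hQ : Q.IsPath) (hR : R.IsPath)
    (hPs : ∀ x ∈ P.support, x ∈ X.verts) (hPe : ∀ e ∈ P.edges, e ∈ X.edgeSet)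
    (hQs : ∀ x ∈ Q.support, x ∈ X.verts) (hQe : ∀ e ∈ Q.edges, e ∈ X.edgeSet)
    (hRs : ∀ x ∈ R.support, x ∈ X.verts) (hRe : ∀ e ∈ R.edges, e ∈ X.edgeSet) :
    ∃ m, m ∈ P.support ∧ m ∈ Q.support ∧ m ∈ R.support := by
  classical
  obtain ⟨x, hx, P₁, P₂, heq, hprop⟩ :=
    exists_prefix_until {y | y ∈ R.support} P R.start_mem_support
  have hP₁ : P₁.IsPath := Walk.IsPath.of_append_left (heq ▸ hP)
  set R₂ := R.dropUntil x hx with hR₂def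
  have hR₂ : R₂.IsPath := hR.dropUntil hx
  -- the concatenation is a path
  have hC : (P₁.append R₂).IsPath := by
    apply Walk.IsPath.mk'
    rw [Walk.support_append, List.nodup_append]
    refine ⟨hP₁.support_nodup, hR₂.support_nodup.tail, ?_⟩
    intro y hy₁ y' hy₂ hyy'
    subst hyy'
    have hyR : y ∈ R.support :=
      Walk.support_dropUntil_subset R hx (List.mem_of_mem_tail hy₂)
    have : y = x := hprop y hy₁ hyR
    subst this
    have := hR₂.support_nodup
    rw [Walk.support_eq_cons R₂] at this
    exact (List.nodup_cons.mp this).1 hy₂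
  -- supports and edges of the concatenation lie in X
  have hCs : ∀ z ∈ (P₁.append R₂).support, z ∈ X.verts := by
    intro z hz
    rcases (Walk.mem_support_append_iff _ _).mp hz with hz | hz
    · exact hPs z (heq ▸ Walk.subset_support_append_left _ _ hz)
    · exact hRs z (Walk.support_dropUntil_subset R hx hz)
  have hCe : ∀ e ∈ (P₁.append R₂).edges, e ∈ X.edgeSet := by
    intro e he
    rw [Walk.edges_append, List.mem_append] at he
    rcases he with he | he
    · exact hPe e (heq ▸ (by rw [Walk.edges_append]; exact List.mem_append_left _ he))
    · exact hRe e (Walk.edges_dropUntil_subset R hx he)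
  have hsupp := (eq_of_paths hX hC hQ hCs hCe hQs hQe
    (hQs p Q.start_mem_support) (hQs s Q.end_mem_support)).1
  refine ⟨x, ?_, ?_, hx⟩
  · rw [heq]
    exact Walk.subset_support_append_left _ _ P₁.end_mem_support
  · rw [← hsupp]
    exact (Walk.mem_support_append_iff _ _).mpr (Or.inl P₁.end_mem_support)


/-- Key four-subgraph lemma: common vertex from triple intersections. -/
lemma four {A B C D : H.Subgraph}
    (hA : A.Connected) (hB : B.Connected) (hC : C.Connected) (hD : D.Connected)
    (hCA : (C ⊔ A).coe.IsAcyclic) (hCB : (C ⊔ B).coe.IsAcyclic)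
    (hCD : (C ⊔ D).coe.IsAcyclic) {p q s : W}
    (hp : p ∈ B.verts ∧ p ∈ C.verts ∧ p ∈ D.verts)
    (hq : q ∈ A.verts ∧ q ∈ C.verts ∧ q ∈ D.verts)
    (hs : s ∈ A.verts ∧ s ∈ B.verts ∧ s ∈ C.verts) :
    ∃ m, m ∈ A.verts ∧ m ∈ B.verts ∧ m ∈ C.verts ∧ m ∈ D.verts := by
  obtain ⟨P, hPp, hPs, hPe⟩ := exists_common_path hC hD hCD hp.2.1 hp.2.2 hq.2.1 hq.2.2
  obtain ⟨Q, hQp, hQs, hQe⟩ := exists_common_path hC hB hCB hp.2.1 hp.1 hs.2.2 hs.2.1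
  obtain ⟨R, hRp, hRs, hRe⟩ := exists_common_path hC hA hCA hq.2.1 hq.1 hs.2.2 hs.1
  have hCacyc : C.coe.IsAcyclic := acyclic_mono le_sup_left hCD
  obtain ⟨m, hmP, hmQ, hmR⟩ := median hCacyc P Q R hPp hQp hRp
    (fun x hx => (hPs x hx).1) (fun e he => (hPe e he).1)
    (fun x hx => (hQs x hx).1) (fun e he => (hQe e he).1)
    (fun x hx => (hRs x hx).1) (fun e he => (hRe e he).1)
  exact ⟨m, (hRs m hmR).2, (hQs m hmQ).2, (hPs m hmP).1, (hPs m hmP).2⟩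

/-- The intersection of two intersecting subtrees is connected. -/
lemma inter_connected {A B : H.Subgraph} (hA : A.Connected) (hB : B.Connected)
    (hacyc : (A ⊔ B).coe.IsAcyclic) (hne : (A.verts ∩ B.verts).Nonempty) :
    (A ⊓ B).Connected := by
  rw [Subgraph.connected_iff]
  constructor
  · constructor
    intro x y
    have hx : (x : W) ∈ A.verts ∩ B.verts := x.2
    have hy : (y : W) ∈ A.verts ∩ B.verts := y.2
    obtain ⟨w, hw, hsup, hedg⟩ := exists_common_path hA hB hacyc hx.1 hx.2 hy.1 hy.2
    have hs' : ∀ z ∈ w.support, z ∈ (A ⊓ B).verts := fun z hz =>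
      ⟨(hsup z hz).1, (hsup z hz).2⟩
    have he' : ∀ e ∈ w.edges, e ∈ (A ⊓ B).edgeSet := by
      intro e he
      induction e using Sym2.ind with
      | _ a b =>
        rw [Subgraph.mem_edgeSet] at *
        exact ⟨Subgraph.mem_edgeSet.mp (hedg _ he).1, Subgraph.mem_edgeSet.mp (hedg _ he).2⟩
    exact ⟨toCoeWalk w hs' he' x.2 y.2⟩
  · rw [Subgraph.verts_inf]
    exact hne


lemma quad {ι : Type*} (F : ι → H.Subgraph)
    (hconn : ∀ i, (F i).Connected)
    (hacyc : ∀ i j, ((F i) ⊔ (F j)).coe.IsAcyclic)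
    (htriple : ∀ i j k : ι, ((F i).verts ∩ (F j).verts).Nonempty →
        ((F i).verts ∩ (F k).verts).Nonempty →
        ((F j).verts ∩ (F k).verts).Nonempty →
        ∃ t : W, t ∈ (F i).verts ∧ t ∈ (F j).verts ∧ t ∈ (F k).verts)
    (a b i j : ι)
    (habi : ∃ t, t ∈ (F a).verts ∧ t ∈ (F b).verts ∧ t ∈ (F i).verts)
    (habj : ∃ t, t ∈ (F a).verts ∧ t ∈ (F b).verts ∧ t ∈ (F j).verts)
    (hij : ((F i).verts ∩ (F j).verts).Nonempty) :
    ∃ t, t ∈ (F a).verts ∧ t ∈ (F b).verts ∧ t ∈ (F i).verts ∧ t ∈ (F j).verts := by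
  obtain ⟨s, hsa, hsb, hsi⟩ := habi
  obtain ⟨s', hsa', hsb', hsj'⟩ := habj
  obtain ⟨q, hqa, hqi, hqj⟩ := htriple a i j ⟨s, hsa, hsi⟩ ⟨s', hsa', hsj'⟩ hij
  obtain ⟨p, hpb, hpi, hpj⟩ := htriple b i j ⟨s, hsb, hsi⟩ ⟨s', hsb', hsj'⟩ hij
  exact four (hconn a) (hconn b) (hconn i) (hconn j)
    (hacyc i a) (hacyc i b) (hacyc i j)
    ⟨hpb, hpi, hpj⟩ ⟨hqa, hqi, hqj⟩ ⟨hsa, hsb, hsi⟩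

lemma key {ι : Type*} :
    ∀ (n : ℕ) (F : ι → H.Subgraph),
      (∀ i, (F i).Connected) →
      (∀ i j, ((F i) ⊔ (F j)).coe.IsAcyclic) →
      (∀ i j k : ι, ((F i).verts ∩ (F j).verts).Nonempty →
        ((F i).verts ∩ (F k).verts).Nonempty →
        ((F j).verts ∩ (F k).verts).Nonempty →
        ∃ t : W, t ∈ (F i).verts ∧ t ∈ (F j).verts ∧ t ∈ (F k).verts) →
      ∀ S : Finset ι, S.card ≤ n → S.Nonempty →
        (∀ i ∈ S, ∀ j ∈ S, ((F i).verts ∩ (F j).verts).Nonempty) →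
        ∃ t : W, ∀ i ∈ S, t ∈ (F i).verts := by
  intro n
  induction n with
  | zero =>
    intro F _ _ _ S hcard hne _
    obtain ⟨a, ha⟩ := hne
    have := Finset.card_pos.mpr ⟨a, ha⟩
    omega
  | succ n IH =>
    intro F hconn hacyc htriple S hcard hne hpair
    classical
    obtain ⟨a, ha⟩ := hne
    by_cases hexb : ∃ b ∈ S, b ≠ a
    · obtain ⟨b, hbS, hba⟩ := hexb
      set F' : ι → H.Subgraph := Function.update F a (F a ⊓ F b) with hF'
      have hF'a : F' a = F a ⊓ F b := Function.update_self a _ F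
      have hF'n : ∀ {x : ι}, x ≠ a → F' x = F x := fun hx => Function.update_of_ne hx _ F
      have hF'le : ∀ x, F' x ≤ F x := by
        intro x
        by_cases hx : x = a
        · subst hx; rw [hF'a]; exact inf_le_left
        · rw [hF'n hx]
      have hva : (F' a).verts = (F a).verts ∩ (F b).verts := by
        rw [hF'a, Subgraph.verts_inf]
      have hconn' : ∀ i, (F' i).Connected := by
        intro i
        by_cases hx : a = i
        · subst hx; rw [hF'a]
          exact inter_connected (hconn a) (hconn b) (hacyc a b) (hpair a ha b hbS)
        · rw [hF'n (Ne.symm hx)]; exact hconn i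
      have hacyc' : ∀ i j, ((F' i) ⊔ (F' j)).coe.IsAcyclic := fun i j =>
        acyclic_mono (sup_le_sup (hF'le i) (hF'le j)) (hacyc i j)
      have htriple' : ∀ i j k : ι, ((F' i).verts ∩ (F' j).verts).Nonempty →
          ((F' i).verts ∩ (F' k).verts).Nonempty →
          ((F' j).verts ∩ (F' k).verts).Nonempty →
          ∃ t : W, t ∈ (F' i).verts ∧ t ∈ (F' j).verts ∧ t ∈ (F' k).verts := by
        intro i j k h1 h2 h3
        by_cases hi : a = i <;> by_cases hj : a = j <;> by_cases hk : a = k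
        · subst hi; subst hj; subst hk
          obtain ⟨t, ht⟩ := h1
          exact ⟨t, ht.1, ht.1, ht.1⟩
        · subst hi; subst hj
          obtain ⟨t, ht⟩ := h2
          exact ⟨t, ht.1, ht.1, ht.2⟩
        · subst hi; subst hk
          obtain ⟨t, ht⟩ := h1
          exact ⟨t, ht.1, ht.2, ht.1⟩
        · subst hi
          rw [hva, hF'n (Ne.symm hj)] at h1
          rw [hva, hF'n (Ne.symm hk)] at h2
          rw [hF'n (Ne.symm hj), hF'n (Ne.symm hk)] at h3
          obtain ⟨t, ht1, ht2, ht3, ht4⟩ := quad F hconn hacyc htriple a b j k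
            (by obtain ⟨t, ht⟩ := h1; exact ⟨t, ht.1.1, ht.1.2, ht.2⟩)
            (by obtain ⟨t, ht⟩ := h2; exact ⟨t, ht.1.1, ht.1.2, ht.2⟩) h3
          refine ⟨t, ?_, ?_, ?_⟩
          · rw [hva]; exact ⟨ht1, ht2⟩
          · rw [hF'n (Ne.symm hj)]; exact ht3
          · rw [hF'n (Ne.symm hk)]; exact ht4
        · subst hj; subst hk
          obtain ⟨t, ht⟩ := h1
          exact ⟨t, ht.1, ht.2, ht.2⟩
        · subst hj
          rw [hF'n (Ne.symm hi), hva] at h1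
          rw [hva, hF'n (Ne.symm hk)] at h3
          rw [hF'n (Ne.symm hi), hF'n (Ne.symm hk)] at h2
          obtain ⟨t, ht1, ht2, ht3, ht4⟩ := quad F hconn hacyc htriple a b i k
            (by obtain ⟨t, ht⟩ := h1; exact ⟨t, ht.2.1, ht.2.2, ht.1⟩)
            (by obtain ⟨t, ht⟩ := h3; exact ⟨t, ht.1.1, ht.1.2, ht.2⟩) h2
          refine ⟨t, ?_, ?_, ?_⟩
          · rw [hF'n (Ne.symm hi)]; exact ht3
          · rw [hva]; exact ⟨ht1, ht2⟩
          · rw [hF'n (Ne.symm hk)]; exact ht4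
        · subst hk
          rw [hF'n (Ne.symm hi), hva] at h2
          rw [hF'n (Ne.symm hj), hva] at h3
          rw [hF'n (Ne.symm hi), hF'n (Ne.symm hj)] at h1
          obtain ⟨t, ht1, ht2, ht3, ht4⟩ := quad F hconn hacyc htriple a b i j
            (by obtain ⟨t, ht⟩ := h2; exact ⟨t, ht.2.1, ht.2.2, ht.1⟩)
            (by obtain ⟨t, ht⟩ := h3; exact ⟨t, ht.2.1, ht.2.2, ht.1⟩) h1
          refine ⟨t, ?_, ?_, ?_⟩
          · rw [hF'n (Ne.symm hi)]; exact ht3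
          · rw [hF'n (Ne.symm hj)]; exact ht4
          · rw [hva]; exact ⟨ht1, ht2⟩
        · rw [hF'n (Ne.symm hi), hF'n (Ne.symm hj)] at h1
          rw [hF'n (Ne.symm hi), hF'n (Ne.symm hk)] at h2
          rw [hF'n (Ne.symm hj), hF'n (Ne.symm hk)] at h3
          obtain ⟨t, ht1, ht2, ht3⟩ := htriple i j k h1 h2 h3
          refine ⟨t, ?_, ?_, ?_⟩
          · rw [hF'n (Ne.symm hi)]; exact ht1
          · rw [hF'n (Ne.symm hj)]; exact ht2
          · rw [hF'n (Ne.symm hk)]; exact ht3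
      have hpair' : ∀ i ∈ S.erase b, ∀ j ∈ S.erase b,
          ((F' i).verts ∩ (F' j).verts).Nonempty := by
        intro i hi j hj
        have hiS := Finset.mem_of_mem_erase hi
        have hjS := Finset.mem_of_mem_erase hj
        by_cases hia : a = i <;> by_cases hja : a = j
        · subst hia; subst hja
          rw [hva]
          obtain ⟨t, ht⟩ := hpair a ha b hbS
          exact ⟨t, ht, ht⟩
        · subst hia
          rw [hva, hF'n (Ne.symm hja)]
          obtain ⟨t, ht1, ht2, ht3⟩ := htriple a b j (hpair a ha b hbS)
            (hpair a ha j hjS) (hpair b hbS j hjS)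
          exact ⟨t, ⟨ht1, ht2⟩, ht3⟩
        · subst hja
          rw [hva, hF'n (Ne.symm hia)]
          obtain ⟨t, ht1, ht2, ht3⟩ := htriple a b i (hpair a ha b hbS)
            (hpair a ha i hiS) (hpair b hbS i hiS)
          exact ⟨t, ht3, ⟨ht1, ht2⟩⟩
        · rw [hF'n (Ne.symm hia), hF'n (Ne.symm hja)]
          exact hpair i hiS j hjS
      obtain ⟨t, ht⟩ := IH F' hconn' hacyc' htriple' (S.erase b)
        (by rw [Finset.card_erase_of_mem hbS]
            have := Finset.card_pos.mpr ⟨a, ha⟩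
            omega)
        ⟨a, Finset.mem_erase.mpr ⟨Ne.symm hba, ha⟩⟩ hpair'
      refine ⟨t, ?_⟩
      intro i hiS
      by_cases hib : i = b
      · subst hib
        have h := ht a (Finset.mem_erase.mpr ⟨Ne.symm hba, ha⟩)
        rw [hva] at h
        exact h.2
      · have h := ht i (Finset.mem_erase.mpr ⟨hib, hiS⟩)
        by_cases hia : a = i
        · subst hia; rw [hva] at h; exact h.1
        · rwa [hF'n (Ne.symm hia)] at h
    · push_neg at hexb
      obtain ⟨t, ht, -, -⟩ := htriple a a a (hpair a ha a ha) (hpair a ha a ha)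
        (hpair a ha a ha)
      exact ⟨t, fun i hi => by rw [hexb i hi]; exact ht⟩

end Stmt4Aux

open Stmt4Aux in
/-- a 2-acyclic family of regions is finitely Helly iff every three
pairwise intersecting members have a common vertex. -/
theorem stmt4 {W ι : Type*} (H : SimpleGraph W) (F : ι → H.Subgraph)
    (hconn : ∀ i, (F i).Connected)
    (h2 : FamAcyclic H F 2) :
    FinHelly H F ↔ ∀ i j k : ι,
      ((F i).verts ∩ (F j).verts).Nonempty →
      ((F i).verts ∩ (F k).verts).Nonempty →
      ((F j).verts ∩ (F k).verts).Nonempty →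
      ∃ t : W, t ∈ (F i).verts ∧ t ∈ (F j).verts ∧ t ∈ (F k).verts := by
  classical
  constructor
  · intro h i j k hij hik hjk
    obtain ⟨tij, htij⟩ := hij
    obtain ⟨tik, htik⟩ := hik
    obtain ⟨tjk, htjk⟩ := hjk
    have hpair : ∀ x ∈ ({i, j, k} : Finset ι), ∀ y ∈ ({i, j, k} : Finset ι),
        ((F x).verts ∩ (F y).verts).Nonempty := by
      intro x hx y hy
      simp only [Finset.mem_insert, Finset.mem_singleton] at hx hy
      rcases hx with rfl | rfl | rfl <;> rcases hy with rfl | rfl | rfl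
      · exact ⟨tij, htij.1, htij.1⟩
      · exact ⟨tij, htij⟩
      · exact ⟨tik, htik⟩
      · exact ⟨tij, htij.2, htij.1⟩
      · exact ⟨tij, htij.2, htij.2⟩
      · exact ⟨tjk, htjk⟩
      · exact ⟨tik, htik.2, htik.1⟩
      · exact ⟨tjk, htjk.2, htjk.1⟩
      · exact ⟨tjk, htjk.2, htjk.2⟩
    obtain ⟨t, ht⟩ := h {i, j, k} ⟨i, by simp⟩ hpair
    exact ⟨t, ht i (by simp), ht j (by simp), ht k (by simp)⟩
  · intro htriple S hne hpair
    have hacyc : ∀ i j, ((F i) ⊔ (F j)).coe.IsAcyclic := by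
      intro i j
      have hcard : ({i, j} : Finset ι).card ≤ 2 :=
        le_trans (Finset.card_insert_le i {j}) (by simp)
      have hx := h2 {i, j} hcard
      have heq : (⨆ k ∈ ({i, j} : Finset ι), F k) = F i ⊔ F j := by
        rw [Finset.iSup_insert, Finset.iSup_singleton]
      rwa [heq] at hx
    exact key S.card F hconn hacyc htriple S le_rfl hne hpair
end

section
/- No wheel W_n with n ≥ 4 admits a 3-acyclic region representation. Consequently, any graph admitting a 3-acyclic region representation has no induced subgraph isomorphic to a wheel W_n with n ≥ 4. -/
open SimpleGraph

/-- A region representation of `G` over `H`: each vertex gets a nonempty connected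
subgraph (region) of `H`, and two distinct vertices are adjacent in `G` iff their
regions share a vertex. -/
def IsRegionRep {V W : Type*} (G : SimpleGraph V) (H : SimpleGraph W)
    (f : V → H.Subgraph) : Prop :=
  (∀ v, (f v).Connected) ∧
  ∀ u v : V, u ≠ v → (G.Adj u v ↔ ((f u).verts ∩ (f v).verts).Nonempty)

/-- The representation is `r`-acyclic: the union of the regions of any at most `r`
vertices is acyclic. -/
def RepAcyclic {V W : Type*} (H : SimpleGraph W) (f : V → H.Subgraph) (r : ℕ) : Prop :=
  ∀ X : Finset V, X.card ≤ r → (⨆ x ∈ X, f x).coe.IsAcyclic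
/-- The wheel `W_n`: a hub (`none`) adjacent to all vertices of a rim cycle on `Fin n`. -/
def wheel (n : ℕ) : SimpleGraph (Option (Fin n)) where
  Adj a b :=
    match a, b with
    | none, none => False
    | none, some _ => True
    | some _, none => True
    | some i, some j => i ≠ j ∧ ((j : ℕ) = ((i : ℕ) + 1) % n ∨ (i : ℕ) = ((j : ℕ) + 1) % n)
  symm := by
    constructor
    rintro (_|i) (_|j) h
    · exact h
    · trivial
    · trivial
    · exact ⟨h.1.symm, h.2.symm⟩
  loopless := by
    constructor
    rintro (_|i) h
    · exact h
    · exact h.1 rfl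



section Helpers
variable {W : Type*} {H : SimpleGraph W}

/-- Hom from the coe of a subgraph to its spanningCoe. -/
def subHom (A : H.Subgraph) : A.coe →g A.spanningCoe :=
  ⟨Subtype.val, fun {a b} h => by simpa using h⟩

lemma support_subset_verts (A : H.Subgraph) {u v : W}
    (hu : u ∈ A.verts) (p : A.spanningCoe.Walk u v) : ∀ x ∈ p.support, x ∈ A.verts := by
  induction p with
  | nil => intro x hx; simp at hx; subst hx; exact hu
  | cons h p ih =>
    intro x hx
    rw [Walk.support_cons] at hx
    rcases List.mem_cons.mp hx with rfl | hx
    · exact A.edge_vert h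
    · exact ih (A.edge_vert h.symm) x hx

lemma exists_spanning_walk (A : H.Subgraph) (hA : A.Connected) {u v : W}
    (hu : u ∈ A.verts) (hv : v ∈ A.verts) : Nonempty (A.spanningCoe.Walk u v) := by
  obtain ⟨p⟩ := hA.coe ⟨u, hu⟩ ⟨v, hv⟩
  exact ⟨p.map (subHom A)⟩

lemma exists_coe_walk (A : H.Subgraph) {u v : W}
    (hu : u ∈ A.verts) (p : A.spanningCoe.Walk u v) :
    ∃ (hv : v ∈ A.verts) (q : A.coe.Walk ⟨u, hu⟩ ⟨v, hv⟩), q.map (subHom A) = p := by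
  induction p with
  | nil => exact ⟨hu, Walk.nil, rfl⟩
  | @cons a b c h p ih =>
    have hb : b ∈ A.verts := A.edge_vert (h.symm)
    obtain ⟨hv, q, hq⟩ := ih hb
    exact ⟨hv, Walk.cons (by simpa using h) q, by simp [hq]; rfl⟩

lemma spanningCoe_isAcyclic {A : H.Subgraph} (h : A.coe.IsAcyclic) :
    A.spanningCoe.IsAcyclic := by
  intro u c hc
  have hu : u ∈ A.verts := by
    cases c with
    | nil => exact absurd rfl hc.ne_nil
    | cons h' _ => exact A.edge_vert h'
  obtain ⟨hv, q, rfl⟩ := exists_coe_walk A hu c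
  exact h q ((Walk.map_isCycle_iff_of_injective Subtype.val_injective).mp hc)

lemma support_mapLe {G G' : SimpleGraph W} (h : G ≤ G') {u v : W} (p : G.Walk u v) :
    (p.mapLe h).support = p.support := by
  have hid : ⇑(Hom.ofLE h) = id := rfl
  simp [Walk.support_map, hid]

lemma edges_mapLe {G G' : SimpleGraph W} (h : G ≤ G') {u v : W} (p : G.Walk u v) :
    (p.mapLe h).edges = p.edges := by
  have hid : ⇑(Hom.ofLE h) = id := rfl
  simp [Walk.edges_map, hid, Sym2.map_id]

/-- In an acyclic ambient graph, any path is "dominated" by any walk with the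
same endpoints living in possibly different subgraphs. -/
lemma path_dominated {F G₁ G₂ : SimpleGraph W} (hF : F.IsAcyclic)
    (h1 : G₁ ≤ F) (h2 : G₂ ≤ F) {u v : W} (p : G₁.Walk u v) (hp : p.IsPath)
    (q : G₂.Walk u v) : p.support ⊆ q.support ∧ p.edges ⊆ q.edges := by
  haveI := Classical.decEq W
  have huniq := isAcyclic_iff_path_unique.mp hF
    ⟨p.mapLe h1, (Walk.mapLe_isPath h1).mpr hp⟩ ⟨(q.mapLe h2).bypass, Walk.bypass_isPath _⟩
  have heq : p.mapLe h1 = (q.mapLe h2).bypass := congrArg Subtype.val huniq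
  constructor
  · intro x hx
    have : x ∈ (q.mapLe h2).bypass.support := by
      rw [← heq, support_mapLe]; exact hx
    have := Walk.support_bypass_subset _ this
    rwa [support_mapLe] at this
  · intro e he
    have : e ∈ (q.mapLe h2).bypass.edges := by
      rw [← heq, edges_mapLe]; exact he
    have := Walk.edges_bypass_subset _ this
    rwa [edges_mapLe] at this

lemma crossing_edge {T : SimpleGraph W} {S S' : Set W} :
    ∀ {a b : W} (p : T.Walk a b), a ∈ S → b ∈ S' →
    (∀ x ∈ p.support, x ∈ S ∪ S') → (∀ x, x ∈ S → x ∈ S' → False) →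
    ∃ x y, T.Adj x y ∧ x ∈ S ∧ y ∈ S' := by
  intro a b p
  induction p with
  | nil => intro ha hb _ hd; exact (hd _ ha hb).elim
  | @cons a c b h p ih =>
    intro ha hb hsupp hd
    have hc : c ∈ S ∪ S' := hsupp c (by simp)
    rcases hc with hc | hc
    · exact ih hc hb (fun x hx => hsupp x (by simp [hx])) hd
    · exact ⟨a, c, h, ha, hc⟩

lemma spanningCoe_sup (A B : H.Subgraph) :
    (A ⊔ B).spanningCoe = A.spanningCoe ⊔ B.spanningCoe := by
  ext x y
  simp [Subgraph.sup_adj]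

end Helpers

lemma wheel_core {W : Type*} {H : SimpleGraph W} (n : ℕ) [NeZero n] (hn : 4 ≤ n)
    (A : H.Subgraph) (R : Fin n → H.Subgraph)
    (hAconn : A.Connected) (hRconn : ∀ i, (R i).Connected)
    (hAR : ∀ i, ((R i).verts ∩ A.verts).Nonempty)
    (hRR : ∀ i : Fin n, ((R i).verts ∩ (R (i + 1)).verts).Nonempty)
    (hdisj : ∀ i j : Fin n, j ≠ i → j ≠ i + 1 → i ≠ j + 1 →
      ∀ x, x ∈ (R i).verts → x ∈ (R j).verts → False)
    (hFF : ∀ i j : Fin n,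
      (A.spanningCoe ⊔ ((R i).spanningCoe ⊔ (R j).spanningCoe)).IsAcyclic) :
    False := by
  haveI := Classical.decEq W
  -- basic Fin arithmetic
  have hvadd : ∀ i : Fin n, ((i + 1 : Fin n) : ℕ) = (i.val + 1) % n := by
    intro i
    rw [Fin.add_def, Fin.val_one']
    rw [Nat.mod_eq_of_lt (show (1:ℕ) < n by omega)]
  have vne : ∀ {a b : Fin n}, a.val ≠ b.val → a ≠ b :=
    fun h hab => h (congrArg Fin.val hab)
  obtain ⟨i0, i1, i2, i3, hv0, hv1, hv2, hv3⟩ :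
      ∃ a b c d : Fin n, a.val = 0 ∧ b.val = 1 ∧ c.val = 2 ∧ d.val = 3 :=
    ⟨⟨0, by omega⟩, ⟨1, by omega⟩, ⟨2, by omega⟩, ⟨3, by omega⟩, rfl, rfl, rfl, rfl⟩
  have e01 : i0 + 1 = i1 := by
    apply Fin.ext; rw [hvadd, hv0, hv1]; exact Nat.mod_eq_of_lt (by omega)
  have e12 : i1 + 1 = i2 := by
    apply Fin.ext; rw [hvadd, hv1, hv2]; exact Nat.mod_eq_of_lt (by omega)
  have e23 : i2 + 1 = i3 := by
    apply Fin.ext; rw [hvadd, hv2, hv3]; exact Nat.mod_eq_of_lt (by omega)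
  have hv31 : ((i3 + 1 : Fin n) : ℕ) = 4 % n := by rw [hvadd, hv3]
  have h4n : (4 : ℕ) % n ≠ 1 := by
    rcases eq_or_lt_of_le hn with h | h
    · rw [← h]; simp
    · rw [Nat.mod_eq_of_lt h]; omega
  have hpred1 : ∀ j : Fin n, ((j + 1 : Fin n) : ℕ) = 1 → j = i0 := by
    intro j hj
    rw [hvadd] at hj
    apply Fin.ext; rw [hv0]
    rcases Nat.lt_or_ge (j.val + 1) n with h | h
    · rw [Nat.mod_eq_of_lt h] at hj; omega
    · have hje : j.val + 1 = n := by have := j.isLt; omega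
      rw [hje, Nat.mod_self] at hj; omega
  have hpred2 : ∀ j : Fin n, ((j + 1 : Fin n) : ℕ) = 2 → j = i1 := by
    intro j hj
    rw [hvadd] at hj
    apply Fin.ext; rw [hv1]
    rcases Nat.lt_or_ge (j.val + 1) n with h | h
    · rw [Nat.mod_eq_of_lt h] at hj; omega
    · have hje : j.val + 1 = n := by have := j.isLt; omega
      rw [hje, Nat.mod_self] at hj; omega
  -- the hub tree is acyclic
  have hTac : A.spanningCoe.IsAcyclic := by
    intro u c hc
    exact hFF i0 i0 (c.mapLe le_sup_left) (hc.mapLe _)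
  -- sets
  let Ts : Fin n → Set W := fun i => (R i).verts ∩ A.verts
  have hmeet : ∀ i j : Fin n, ∀ x : W, x ∈ Ts i → x ∈ Ts j →
      j = i ∨ j = i + 1 ∨ i = j + 1 := by
    intro i j x hi hj
    by_contra hc
    push_neg at hc
    exact hdisj i j hc.1 hc.2.1 hc.2.2 x hi.1 hj.1
  have d13 : ∀ x : W, x ∈ Ts i1 → x ∈ Ts i3 → False := by
    intro x h1 h3
    rcases hmeet i1 i3 x h1 h3 with h | h | h
    · exact vne (by rw [hv3, hv1]; omega) h
    · rw [e12] at h; exact vne (by rw [hv3, hv2]; omega) h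
    · have := congrArg Fin.val h; rw [hv31, hv1] at this; exact h4n this.symm
  have d02 : ∀ x : W, x ∈ Ts i0 → x ∈ Ts i2 → False := by
    intro x h0 h2
    rcases hmeet i0 i2 x h0 h2 with h | h | h
    · exact vne (by rw [hv2, hv0]; omega) h
    · rw [e01] at h; exact vne (by rw [hv2, hv1]; omega) h
    · rw [e23] at h; exact vne (by rw [hv0, hv3]; omega) h
  -- paths between vertices of `Ts i` stay within `Ts i`
  have hTpath : ∀ (i : Fin n) (u v : W), u ∈ Ts i → v ∈ Ts i →
      ∃ p : A.spanningCoe.Walk u v, p.IsPath ∧ ∀ x ∈ p.support, x ∈ Ts i := by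
    intro i u v hu hv
    obtain ⟨w0⟩ := exists_spanning_walk A hAconn hu.2 hv.2
    refine ⟨w0.bypass, w0.bypass_isPath, ?_⟩
    intro x hx
    have hxA : x ∈ A.verts :=
      support_subset_verts A hu.2 w0 x (Walk.support_bypass_subset _ hx)
    obtain ⟨q⟩ := exists_spanning_walk (R i) (hRconn i) hu.1 hv.1
    have hd := path_dominated (hFF i i) le_sup_left
      (le_sup_of_le_right le_sup_left) w0.bypass w0.bypass_isPath q
    exact ⟨support_subset_verts (R i) hu.1 q x (hd.1 hx), hxA⟩
  -- consecutive `Ts` intersect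
  have hW : ∀ i : Fin n, (Ts i ∩ Ts (i + 1)).Nonempty := by
    intro i
    by_contra hcon
    have hdis : ∀ x : W, x ∈ Ts i → x ∈ Ts (i + 1) → False :=
      fun x h h' => hcon ⟨x, h, h'⟩
    obtain ⟨t0, ht0⟩ := hAR i
    obtain ⟨t1, ht1⟩ := hAR (i + 1)
    obtain ⟨q0, hq0⟩ := hRR i
    obtain ⟨p⟩ := exists_spanning_walk A hAconn ht0.2 ht1.2
    obtain ⟨qa⟩ := exists_spanning_walk (R i) (hRconn i) ht0.1 hq0.1
    obtain ⟨qb⟩ := exists_spanning_walk (R (i + 1)) (hRconn (i + 1)) hq0.2 ht1.1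
    have hd := path_dominated (hFF i (i + 1)) le_sup_left le_sup_right
      p.bypass p.bypass_isPath ((qa.mapLe le_sup_left).append (qb.mapLe le_sup_right))
    have hsupp2 : ∀ x ∈ p.bypass.support, x ∈ Ts i ∪ Ts (i + 1) := by
      intro x hx
      have hxA : x ∈ A.verts :=
        support_subset_verts A ht0.2 p x (Walk.support_bypass_subset _ hx)
      have hxq := hd.1 hx
      rw [Walk.support_append] at hxq
      rcases List.mem_append.mp hxq with h | h
      · rw [support_mapLe] at h
        exact Or.inl ⟨support_subset_verts (R i) ht0.1 qa x h, hxA⟩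
      · have h' := List.mem_of_mem_tail h
        rw [support_mapLe] at h'
        exact Or.inr ⟨support_subset_verts (R (i + 1)) hq0.2 qb x h', hxA⟩
    obtain ⟨u, v, huv, hu, hv⟩ :=
      crossing_edge (S := Ts i) (S' := Ts (i + 1)) p.bypass ⟨ht0.1, ht0.2⟩ ⟨ht1.1, ht1.2⟩ hsupp2 hdis
    obtain ⟨ra⟩ := exists_spanning_walk (R i) (hRconn i) hu.1 hq0.1
    obtain ⟨rb⟩ := exists_spanning_walk (R (i + 1)) (hRconn (i + 1)) hq0.2 hv.1
    have hpe : (Walk.cons huv Walk.nil).IsPath := by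
      simp [Walk.isPath_def, huv.ne]
    have hd2 := path_dominated (hFF i (i + 1)) le_sup_left le_sup_right
      (Walk.cons huv Walk.nil) hpe ((ra.mapLe le_sup_left).append (rb.mapLe le_sup_right))
    have hedge := hd2.2 (show s(u, v) ∈ (Walk.cons huv Walk.nil).edges by simp)
    rw [Walk.edges_append] at hedge
    rcases List.mem_append.mp hedge with he | he
    · rw [edges_mapLe] at he
      have hvs : v ∈ ra.support := Walk.snd_mem_support_of_mem_edges ra he
      exact hdis v ⟨support_subset_verts (R i) hu.1 ra v hvs, hv.2⟩ hv
    · rw [edges_mapLe] at he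
      have hus : u ∈ rb.support := Walk.fst_mem_support_of_mem_edges rb he
      exact hdis u hu ⟨support_subset_verts (R (i + 1)) hq0.2 rb u hus, hu.2⟩
  choose w hw using hW
  -- segments of the rim cycle inside the hub tree
  have seg : ∀ k : Fin n, ∃ p : A.spanningCoe.Walk (w k) (w (k + 1)),
      p.IsPath ∧ ∀ x ∈ p.support, x ∈ Ts (k + 1) :=
    fun k => hTpath (k + 1) _ _ (hw k).2 (hw (k + 1)).1
  -- the far-side walk from `w i2` back to `w i0`
  let B : Set W := {x | ∃ j : Fin n, j ≠ i1 ∧ j ≠ i2 ∧ x ∈ Ts j}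
  have hi0B : ∀ x, x ∈ Ts i0 → x ∈ B := by
    intro x hx
    exact ⟨i0, vne (by rw [hv0, hv1]; omega), vne (by rw [hv0, hv2]; omega), hx⟩
  have hlast : ∀ k : Fin n, k.val = n - 1 →
      ∃ q : A.spanningCoe.Walk (w k) (w i0), ∀ x ∈ q.support, x ∈ B := by
    intro k hk
    have hk1 : k + 1 = i0 := by
      apply Fin.ext
      rw [hvadd, hk, hv0, Nat.sub_add_cancel (by omega), Nat.mod_self]
    obtain ⟨p, hp, hsupp⟩ := seg k
    refine ⟨p.copy rfl (congrArg w hk1), ?_⟩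
    intro x hx
    rw [Walk.support_copy] at hx
    exact hi0B x (hk1 ▸ hsupp x hx)
  have hB : ∀ (m : ℕ) (k : Fin n), n - 1 - k.val ≤ m → k ≠ i0 → k ≠ i1 →
      ∃ q : A.spanningCoe.Walk (w k) (w i0), ∀ x ∈ q.support, x ∈ B := by
    intro m
    induction m with
    | zero =>
      intro k hk _ _
      exact hlast k (by have := k.isLt; omega)
    | succ m ih =>
      intro k hk hk0 hk1
      by_cases hke : k.val = n - 1
      · exact hlast k hke
      · have hklt : k.val + 1 < n := by have := k.isLt; omega
        have hk1v : ((k + 1 : Fin n) : ℕ) = k.val + 1 := by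
          rw [hvadd]; exact Nat.mod_eq_of_lt hklt
        have hkv0 : k.val ≠ 0 := fun h => hk0 (Fin.ext (by rw [hv0, h]))
        have hkv1 : k.val ≠ 1 := fun h => hk1 (Fin.ext (by rw [hv1, h]))
        have hne0 : k + 1 ≠ i0 := vne (by rw [hk1v, hv0]; omega)
        have hne1 : k + 1 ≠ i1 := vne (by rw [hk1v, hv1]; omega)
        have hne2 : k + 1 ≠ i2 := vne (by rw [hk1v, hv2]; omega)
        obtain ⟨q, hq⟩ := ih (k + 1) (by rw [hk1v]; omega) hne0 hne1
        obtain ⟨p, hp, hsupp⟩ := seg k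
        refine ⟨p.append q, ?_⟩
        intro x hx
        rw [Walk.support_append] at hx
        rcases List.mem_append.mp hx with h | h
        · exact ⟨k + 1, hne1, hne2, hsupp x h⟩
        · exact hq x (List.mem_of_mem_tail h)
  -- the near-side path from `w i0` to `w i2`
  obtain ⟨p0, hp0, hs0⟩ := seg i0
  obtain ⟨p1, hp1, hs1⟩ := seg i1
  have hQsupp0 : ∀ x ∈ ((p0.copy rfl (congrArg w e01)).append
      (p1.copy rfl (congrArg w e12))).support, x ∈ Ts i1 ∪ Ts i2 := by
    intro x hx
    rw [Walk.support_append] at hx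
    rcases List.mem_append.mp hx with h | h
    · rw [Walk.support_copy] at h
      exact Or.inl (e01 ▸ hs0 x h)
    · have h' := List.mem_of_mem_tail h
      rw [Walk.support_copy] at h'
      exact Or.inr (e12 ▸ hs1 x h')
  set Qw := ((p0.copy rfl (congrArg w e01)).append (p1.copy rfl (congrArg w e12))) with hQw
  obtain ⟨qB, hqB⟩ := hB n i2 (by omega) (vne (by rw [hv2, hv0]; omega))
    (vne (by rw [hv2, hv1]; omega))
  have hd := path_dominated hTac le_rfl le_rfl Qw.bypass Qw.bypass_isPath qB.reverse
  have hQmem : ∀ x ∈ Qw.bypass.support, x ∈ (Ts i0 ∩ Ts i1) ∪ (Ts i2 ∩ Ts i3) := by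
    intro x hx
    have h12 := hQsupp0 x (Walk.support_bypass_subset _ hx)
    have hxB : x ∈ B := by
      have hmem := hd.1 hx
      rw [Walk.support_reverse] at hmem
      exact hqB x (List.mem_reverse.mp hmem)
    obtain ⟨j, hj1, hj2, hxj⟩ := hxB
    rcases h12 with h | h
    · rcases hmeet i1 j x h hxj with hj | hj | hj
      · exact absurd hj hj1
      · rw [e12] at hj; exact absurd hj hj2
      · have hji0 : j = i0 := hpred1 j (by rw [← hj, hv1])
        exact Or.inl ⟨hji0 ▸ hxj, h⟩
    · rcases hmeet i2 j x h hxj with hj | hj | hj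
      · exact absurd hj hj2
      · rw [e23] at hj; exact Or.inr ⟨h, hj ▸ hxj⟩
      · have hji1 : j = i1 := hpred2 j (by rw [← hj, hv2])
        exact absurd hji1 hj1
  have hABdisj : ∀ x : W, x ∈ Ts i0 ∩ Ts i1 → x ∈ Ts i2 ∩ Ts i3 → False :=
    fun x ha hb => d13 x ha.2 hb.2
  obtain ⟨u, v, huv, hu, hv⟩ := crossing_edge (S := Ts i0 ∩ Ts i1) (S' := Ts i2 ∩ Ts i3) Qw.bypass
    ⟨(hw i0).1, e01 ▸ (hw i0).2⟩ ⟨(hw i2).1, e23 ▸ (hw i2).2⟩ hQmem hABdisj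
  have hw1 : w i1 ∈ Ts i1 ∩ Ts i2 := ⟨(hw i1).1, e12 ▸ (hw i1).2⟩
  obtain ⟨P1, hP1, hs1'⟩ := hTpath i1 u (w i1) hu.2 hw1.1
  obtain ⟨P2, hP2, hs2'⟩ := hTpath i2 (w i1) v hw1.2 hv.1
  have hpe : (Walk.cons huv Walk.nil).IsPath := by simp [Walk.isPath_def, huv.ne]
  have hd3 := path_dominated hTac le_rfl le_rfl (Walk.cons huv Walk.nil) hpe (P1.append P2)
  have hedge := hd3.2 (show s(u, v) ∈ (Walk.cons huv Walk.nil).edges by simp)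
  rw [Walk.edges_append] at hedge
  rcases List.mem_append.mp hedge with he | he
  · exact d13 v (hs1' v (Walk.snd_mem_support_of_mem_edges P1 he)) hv.2
  · exact d02 u hu.1 (hs2' u (Walk.fst_mem_support_of_mem_edges P2 he))

lemma wheel_no_rep (n : ℕ) (hn : 4 ≤ n) {W : Type*} {H : SimpleGraph W}
    (f : Option (Fin n) → H.Subgraph)
    (hconn : ∀ v, (f v).Connected)
    (hadj : ∀ u v : Option (Fin n), u ≠ v →
      ((wheel n).Adj u v ↔ ((f u).verts ∩ (f v).verts).Nonempty))
    (hac : RepAcyclic H f 3) : False := by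
  haveI : NeZero n := ⟨by omega⟩
  have h1n : ((1 : Fin n) : ℕ) = 1 := by
    rw [Fin.val_one']; exact Nat.mod_eq_of_lt (by omega)
  have hvadd : ∀ i : Fin n, ((i + 1 : Fin n) : ℕ) = (i.val + 1) % n := by
    intro i; rw [Fin.add_def, h1n]
  have hsne : ∀ i : Fin n, i ≠ i + 1 := by
    intro i h
    have h2 := congrArg Fin.val h
    rw [hvadd] at h2
    rcases Nat.lt_or_ge (i.val + 1) n with h'' | h''
    · rw [Nat.mod_eq_of_lt h''] at h2; omega
    · have h3 : i.val + 1 = n := by have := i.isLt; omega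
      rw [h3, Nat.mod_self] at h2; omega
  have hsup3 : ∀ a b c : Option (Fin n), (f a ⊔ (f b ⊔ f c)).coe.IsAcyclic := by
    intro a b c
    have hcard : ({a, b, c} : Finset (Option (Fin n))).card ≤ 3 := by
      apply le_trans (Finset.card_insert_le _ _)
      apply Nat.succ_le_succ
      apply le_trans (Finset.card_insert_le _ _)
      exact Nat.succ_le_succ (le_of_eq (Finset.card_singleton _))
    have h := hac _ hcard
    have heq : (⨆ x ∈ ({a, b, c} : Finset (Option (Fin n))), f x) = f a ⊔ (f b ⊔ f c) := by
      rw [Finset.iSup_insert, Finset.iSup_insert, Finset.iSup_singleton]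
    rwa [heq] at h
  apply wheel_core n hn (f none) (fun i => f (some i)) (hconn none)
    (fun i => hconn (some i))
  · intro i
    exact (hadj (some i) none (by simp)).mp trivial
  · intro i
    refine (hadj (some i) (some (i + 1)) (fun h => hsne i (Option.some.inj h))).mp ?_
    show i ≠ i + 1 ∧
      (((i + 1 : Fin n) : ℕ) = (i.val + 1) % n ∨ (i : ℕ) = (((i + 1 : Fin n) : ℕ) + 1) % n)
    exact ⟨hsne i, Or.inl (hvadd i)⟩
  · intro i j hji hji1 hij1 x hxi hxj
    have hne : (some i : Option (Fin n)) ≠ some j := fun h => hji (Option.some.inj h).symm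
    have hA := (hadj _ _ hne).mpr ⟨x, hxi, hxj⟩
    obtain ⟨hne', hc | hc⟩ : i ≠ j ∧
        ((j : ℕ) = ((i : ℕ) + 1) % n ∨ (i : ℕ) = ((j : ℕ) + 1) % n) := hA
    · exact hji1 (Fin.ext (by rw [hvadd]; exact hc))
    · exact hij1 (Fin.ext (by rw [hvadd]; exact hc))
  · intro i j
    have h := spanningCoe_isAcyclic (hsup3 none (some i) (some j))
    rwa [spanningCoe_sup, spanningCoe_sup] at h

universe u v

/-- no wheel `W_n` with `n ≥ 4` has a 3-acyclic region representation;
consequently no graph with a 3-acyclic region representation contains an induced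
subgraph isomorphic to such a wheel. -/
theorem stmt8 (n : ℕ) (hn : 4 ≤ n) :
    (∀ {W : Type u} (H : SimpleGraph W) (f : Option (Fin n) → H.Subgraph),
      ¬ (IsRegionRep (wheel n) H f ∧ RepAcyclic H f 3)) ∧
    (∀ {V : Type u} {W : Type v} (G : SimpleGraph V) (H : SimpleGraph W)
        (f : V → H.Subgraph), IsRegionRep G H f → RepAcyclic H f 3 →
      ¬ ∃ φ : Option (Fin n) → V, Function.Injective φ ∧
          ∀ a b, G.Adj (φ a) (φ b) ↔ (wheel n).Adj a b) := by
  constructor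
  · rintro W H f ⟨⟨hconn, hadj⟩, hac⟩
    exact wheel_no_rep n hn f hconn hadj hac
  · rintro V W G H f hrep hac ⟨φ, hinj, hiso⟩
    haveI := Classical.decEq V
    refine wheel_no_rep n hn (fun a => f (φ a)) (fun a => hrep.1 (φ a)) ?_ ?_
    · intro a b hab
      rw [← hiso a b]
      exact hrep.2 (φ a) (φ b) (fun h => hab (hinj h))
    · intro X hX
      show (⨆ x ∈ X, f (φ x)).coe.IsAcyclic
      have heq : (⨆ x ∈ X, f (φ x)) = ⨆ y ∈ X.image φ, f y :=
        (Finset.iSup_finset_image).symm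
      rw [heq]
      exact hac (X.image φ) (le_trans Finset.card_image_le hX)
end

section
/- If a graph G admits a subtree representation over a tree (more generally, an acyclic region representation), then G is chordal. -/
open SimpleGraph

/-- A graph is chordal if every cycle of length at least 4 has a chord: an edge of the
graph between two vertices of the cycle that is not an edge of the cycle. -/
def Chordal {V : Type*} (G : SimpleGraph V) : Prop :=
  ∀ (v : V) (w : G.Walk v v), w.IsCycle → 4 ≤ w.length →
    ∃ a b, a ∈ w.support ∧ b ∈ w.support ∧ G.Adj a b ∧ ¬ w.toSubgraph.Adj a b

namespace Stmt9Aux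

variable {V W : Type*} {G : SimpleGraph V} {H : SimpleGraph W}

/-- Union of the regions along a list of vertices. -/
def U (f : V → H.Subgraph) : List V → H.Subgraph
  | [] => ⊥
  | a :: l => f a ⊔ U f l

lemma le_U {f : V → H.Subgraph} {x : V} : ∀ {l : List V}, x ∈ l → f x ≤ U f l
  | a :: l, h => by
    rcases List.mem_cons.mp h with rfl | h
    · exact le_sup_left
    · exact le_trans (le_U h) le_sup_right

lemma U_le {f : V → H.Subgraph} {K : H.Subgraph} :
    ∀ {l : List V}, (∀ x ∈ l, f x ≤ K) → U f l ≤ K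
  | [], _ => bot_le
  | a :: l, h => sup_le (h a (by simp)) (U_le fun x hx => h x (by simp [hx]))

lemma U_adj {f : V → H.Subgraph} {x y : W} :
    ∀ {l : List V}, (U f l).Adj x y → ∃ u ∈ l, (f u).Adj x y
  | [], h => by simp [U] at h
  | a :: l, h => by
    rcases (Subgraph.sup_adj).mp h with h | h
    · exact ⟨a, by simp, h⟩
    · obtain ⟨u, hu, h⟩ := U_adj h
      exact ⟨u, by simp [hu], h⟩

lemma mem_U {f : V → H.Subgraph} {q : W} :
    ∀ {l : List V}, q ∈ (U f l).verts → ∃ u ∈ l, q ∈ (f u).verts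
  | [], h => by simp [U] at h
  | a :: l, h => by
    rcases ((Subgraph.verts_sup _ _) ▸ h : q ∈ (f a).verts ∪ (U f l).verts) with h | h
    · exact ⟨a, by simp, h⟩
    · obtain ⟨u, hu, h⟩ := mem_U h
      exact ⟨u, by simp [hu], h⟩

lemma U_conn {f : V → H.Subgraph} (hconn : ∀ v, (f v).Connected)
    (hadj : ∀ u v : V, G.Adj u v → ((f u).verts ∩ (f v).verts).Nonempty) :
    ∀ {a b : V} (c : G.Walk a b), (U f c.support).Connected
  | _, _, Walk.nil => by
    rw [Walk.support_nil]
    show (f _ ⊔ ⊥).Connected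
    rw [sup_bot_eq]
    exact hconn _
  | _, _, Walk.cons h c => by
    rw [Walk.support_cons]
    show (f _ ⊔ U f c.support).Connected
    refine Subgraph.connected_sup (hconn _).preconnected (U_conn hconn hadj c).preconnected ?_
    obtain ⟨q, hq1, hq2⟩ := hadj _ _ h
    rw [Subgraph.verts_inf]
    exact ⟨q, hq1, (Subgraph.verts_mono (le_U c.start_mem_support)) hq2⟩

lemma acyclic_mono {K T : H.Subgraph} (hle : K ≤ T) (hT : T.coe.IsAcyclic) :
    K.coe.IsAcyclic := fun _ c hc =>
  hT (c.map (Subgraph.inclusion hle))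
    ((Walk.map_isCycle_iff_of_injective (Subgraph.inclusion.injective hle)).mpr hc)

lemma mem_of_map_inclusion {K S : H.Subgraph} (hle : K ≤ S) {a b} (Wk : K.coe.Walk a b)
    {q : S.verts} (hq : q ∈ (Wk.map (Subgraph.inclusion hle)).support) : ↑q ∈ K.verts := by
  rw [Walk.support_map] at hq
  obtain ⟨x, hx, rfl⟩ := List.mem_map.mp hq
  exact x.2

lemma cross {α : Type*} {Γ : SimpleGraph α} {A B : Set α}
    (hd : ∀ z, z ∈ A → z ∈ B → False) {a b} (p : Γ.Walk a b) :
    a ∈ A → b ∈ B → (∀ q ∈ p.support, q ∈ A ∪ B) →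
      ∃ x y, Γ.Adj x y ∧ x ∈ A ∧ y ∈ B := by
  induction p with
  | nil => exact fun ha hb _ => absurd hb (fun hb => hd _ ha hb)
  | cons h p ih =>
    intro ha hb hsup
    have hmem := hsup _ (by rw [Walk.support_cons]; exact List.mem_cons_of_mem _ p.start_mem_support)
    rcases hmem with hc | hc
    · exact ih hc hb fun q hq => hsup q (by rw [Walk.support_cons]; exact List.mem_cons_of_mem _ hq)
    · exact ⟨_, _, h, ha, hc⟩

end Stmt9Aux

open Stmt9Aux in
/-- if `G` admits an acyclic region representation (in particular a
subtree representation over a tree), then `G` is chordal. -/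
theorem stmt9 {V W : Type*} (G : SimpleGraph V) (H : SimpleGraph W) (f : V → H.Subgraph)
    (hrep : IsRegionRep G H f) (hac : (⨆ v, f v).coe.IsAcyclic) :
    Chordal G := by
  classical
  obtain ⟨hconn, hiff⟩ := hrep
  intro v₀ w hcyc hlen
  by_contra hcon
  push_neg at hcon
  -- hcon : ∀ a b, a ∈ w.support → b ∈ w.support → G.Adj a b → w.toSubgraph.Adj a b
  cases w with
  | nil => simp at hlen
  | cons h01 w1 =>
  rename_i v₁
  cases w1 with
  | nil => simp at hlen
  | cons h12 w2 =>
  rename_i v₂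
  cases w2 with
  | nil => simp at hlen
  | cons h23 r =>
  rename_i v₃
  set w : G.Walk v₀ v₀ := Walk.cons h01 (Walk.cons h12 (Walk.cons h23 r)) with hw
  -- basic facts
  have hsupp : w.support = v₀ :: v₁ :: v₂ :: r.support := by
    simp [hw, Walk.support_cons]
  have htail : (v₁ :: v₂ :: r.support).Nodup := by
    have := hcyc.support_nodup
    rwa [hsupp] at this
  have hv1l : v₁ ∉ v₂ :: r.support := (List.nodup_cons.mp htail).1
  have hv1r : v₁ ∉ r.support := fun h => hv1l (List.mem_cons_of_mem _ h)
  have hv12 : v₁ ≠ v₂ := fun h => hv1l (h ▸ List.mem_cons_self)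
  have htail2 := (List.nodup_cons.mp htail).2
  have hv2r : v₂ ∉ r.support := (List.nodup_cons.mp htail2).1
  have hrnodup : r.support.Nodup := (List.nodup_cons.mp htail2).2
  have hv0r : v₀ ∈ r.support := r.end_mem_support
  have hv3r : v₃ ∈ r.support := r.start_mem_support
  have hlenr : 1 ≤ r.length := by
    have : w.length = r.length + 3 := by simp [hw, Walk.length_cons]
    omega
  have h30 : v₃ ≠ v₀ := by
    intro h
    subst h
    have : (⟨r, Walk.IsPath.mk' hrnodup⟩ : G.Path v₃ v₃) = Path.nil := Path.loop_eq _
    have : r = Walk.nil := congrArg Subtype.val this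
    rw [this] at hlenr
    simp at hlenr
  have hne01 : v₀ ≠ v₁ := h01.ne
  have hne23 : v₂ ≠ v₃ := h23.ne
  have hv02 : v₀ ≠ v₂ := fun h => hv2r (h ▸ hv0r)
  have hv13 : v₁ ≠ v₃ := fun h => hv1r (h ▸ hv3r)
  -- membership in support
  have hm0 : v₀ ∈ w.support := by rw [hsupp]; simp
  have hm1 : v₁ ∈ w.support := by rw [hsupp]; simp
  have hm2 : v₂ ∈ w.support := by rw [hsupp]; simp
  have hm3 : v₃ ∈ w.support := by rw [hsupp]; simp [hv3r]
  have hmr : ∀ x ∈ r.support, x ∈ w.support := by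
    intro x hx; rw [hsupp]; simp [hx]
  -- edges of w
  have hedges : w.edges = s(v₀,v₁) :: s(v₁,v₂) :: s(v₂,v₃) :: r.edges := by
    simp [hw, Walk.edges_cons]
  -- E1 : edges at v₁
  have E1 : ∀ x, w.toSubgraph.Adj v₁ x → x = v₀ ∨ x = v₂ := by
    intro x hx
    have he : s(v₁, x) ∈ w.edges := by
      rw [← Walk.mem_edges_toSubgraph]
      exact Subgraph.mem_edgeSet.mpr hx
    rw [hedges] at he
    simp only [List.mem_cons] at he
    rcases he with he | he | he | he
    · rw [Sym2.eq_iff] at he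
      rcases he with ⟨h1, h2⟩ | ⟨h1, h2⟩
      · exact absurd h1.symm hne01
      · exact Or.inl h2
    · rw [Sym2.eq_iff] at he
      rcases he with ⟨h1, h2⟩ | ⟨h1, h2⟩
      · exact Or.inr h2
      · exact absurd h1 hv12
    · rw [Sym2.eq_iff] at he
      rcases he with ⟨h1, h2⟩ | ⟨h1, h2⟩
      · exact absurd h1 hv12
      · exact absurd h1 hv13
    · exact absurd (Walk.fst_mem_support_of_mem_edges r he) hv1r
  -- E2 : edges at v₂
  have E2 : ∀ x, w.toSubgraph.Adj v₂ x → x = v₁ ∨ x = v₃ := by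
    intro x hx
    have he : s(v₂, x) ∈ w.edges := by
      rw [← Walk.mem_edges_toSubgraph]
      exact Subgraph.mem_edgeSet.mpr hx
    rw [hedges] at he
    simp only [List.mem_cons] at he
    rcases he with he | he | he | he
    · rw [Sym2.eq_iff] at he
      rcases he with ⟨h1, h2⟩ | ⟨h1, h2⟩
      · exact absurd h1.symm hv02
      · exact absurd h1 (Ne.symm hv12)
    · rw [Sym2.eq_iff] at he
      rcases he with ⟨h1, h2⟩ | ⟨h1, h2⟩
      · exact absurd h1 (Ne.symm hv12)
      · exact Or.inl h2
    · rw [Sym2.eq_iff] at he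
      rcases he with ⟨h1, h2⟩ | ⟨h1, h2⟩
      · exact Or.inr h2
      · exact absurd h1 hne23
    · exact absurd (Walk.fst_mem_support_of_mem_edges r he) hv2r
  -- meeting regions of support vertices
  have hmeet : ∀ u z, u ∈ w.support → z ∈ w.support →
      ((f u).verts ∩ (f z).verts).Nonempty → u = z ∨ w.toSubgraph.Adj u z := by
    intro u z hu hz hne
    by_cases h : u = z
    · exact Or.inl h
    · exact Or.inr (hcon u z hu hz ((hiff u z h).mpr hne))
  have hadj' : ∀ u z : V, G.Adj u z → ((f u).verts ∩ (f z).verts).Nonempty :=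
    fun u z h => (hiff u z h.ne).mp h
  have hmeet13 : ¬ ((f v₁).verts ∩ (f v₃).verts).Nonempty := by
    intro hne
    rcases hmeet v₁ v₃ hm1 hm3 hne with h | h
    · exact hv13 h
    · rcases E1 _ h with h | h
      · exact h30 h
      · exact hne23 h.symm
  have hmeet02 : ¬ ((f v₀).verts ∩ (f v₂).verts).Nonempty := by
    intro hne
    rcases hmeet v₀ v₂ hm0 hm2 hne with h | h
    · exact hv02 h
    · rcases E2 _ h.symm with h | h
      · exact hne01 h
      · exact h30 h.symm
  -- the two connected pieces
  set K₁ : H.Subgraph := f v₁ ⊔ f v₂ with hK₁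
  set K₂ : H.Subgraph := U f r.support with hK₂
  set S' : H.Subgraph := K₁ ⊔ K₂ with hS'
  have hK₁S : K₁ ≤ S' := le_sup_left
  have hK₂S : K₂ ≤ S' := le_sup_right
  have hS'T : S' ≤ ⨆ v, f v :=
    sup_le (sup_le (le_iSup f v₁) (le_iSup f v₂)) (U_le fun x _ => le_iSup f x)
  have hS'ac : S'.coe.IsAcyclic := acyclic_mono hS'T hac
  have hK₁conn : K₁.Connected := by
    refine Subgraph.connected_sup (hconn v₁).preconnected (hconn v₂).preconnected ?_
    rw [Subgraph.verts_inf]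
    exact hadj' _ _ h12
  have hK₂conn : K₂.Connected := U_conn hconn hadj' r
  -- the two points
  obtain ⟨p₀, hp01⟩ := hadj' v₀ v₁ h01
  obtain ⟨p₂, hp23⟩ := hadj' v₂ v₃ h23
  have hp₀K₁ : p₀ ∈ K₁.verts := by rw [hK₁, Subgraph.verts_sup]; exact Or.inl hp01.2
  have hp₂K₁ : p₂ ∈ K₁.verts := by rw [hK₁, Subgraph.verts_sup]; exact Or.inr hp23.1
  have hp₀K₂ : p₀ ∈ K₂.verts := (Subgraph.verts_mono (le_U hv0r)) hp01.1
  have hp₂K₂ : p₂ ∈ K₂.verts := (Subgraph.verts_mono (le_U hv3r)) hp23.2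
  have hp₀S : p₀ ∈ S'.verts := (Subgraph.verts_mono hK₁S) hp₀K₁
  have hp₂S : p₂ ∈ S'.verts := (Subgraph.verts_mono hK₁S) hp₂K₁
  -- walks
  obtain ⟨W1⟩ := hK₁conn ⟨p₀, hp₀K₁⟩ ⟨p₂, hp₂K₁⟩
  obtain ⟨W2⟩ := hK₂conn ⟨p₂, hp₂K₂⟩ ⟨p₀, hp₀K₂⟩
  let W1' : S'.coe.Walk ⟨p₀, hp₀S⟩ ⟨p₂, hp₂S⟩ :=
    (W1.map (Subgraph.inclusion hK₁S)).copy (Subtype.ext rfl) (Subtype.ext rfl)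
  let W2' : S'.coe.Walk ⟨p₂, hp₂S⟩ ⟨p₀, hp₀S⟩ :=
    (W2.map (Subgraph.inclusion hK₂S)).copy (Subtype.ext rfl) (Subtype.ext rfl)
  have hW1sup : ∀ q ∈ W1'.support, ↑q ∈ K₁.verts := by
    intro q hq
    rw [Walk.support_copy] at hq
    exact mem_of_map_inclusion hK₁S W1 hq
  have hW2sup : ∀ q ∈ W2'.support, ↑q ∈ K₂.verts := by
    intro q hq
    rw [Walk.support_copy] at hq
    exact mem_of_map_inclusion hK₂S W2 hq
  -- paths and uniqueness
  have huniq := isAcyclic_iff_path_unique.mp hS'ac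
  have hQeq : W1'.bypass = W2'.reverse.bypass := by
    have := huniq ⟨W1'.bypass, W1'.bypass_isPath⟩ ⟨W2'.reverse.bypass, W2'.reverse.bypass_isPath⟩
    exact congrArg Subtype.val this
  set Q : S'.coe.Walk ⟨p₀, hp₀S⟩ ⟨p₂, hp₂S⟩ := W1'.bypass with hQ
  have hQ1 : ∀ q ∈ Q.support, ↑q ∈ K₁.verts :=
    fun q hq => hW1sup q (W1'.support_bypass_subset hq)
  have hQ2 : ∀ q ∈ Q.support, ↑q ∈ K₂.verts := by
    intro q hq
    have hq2 : q ∈ (W2'.reverse.bypass).support := hQeq ▸ hq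
    have := W2'.reverse.support_bypass_subset hq2
    rw [Walk.support_reverse] at this
    exact hW2sup q (List.mem_reverse.mp this)
  -- the crossing sets
  set A : Set S'.verts := {z | ↑z ∈ (f v₀).verts ∧ ↑z ∈ (f v₁).verts} with hA
  set B : Set S'.verts := {z | ↑z ∈ (f v₂).verts ∧ ↑z ∈ (f v₃).verts} with hB
  have hd : ∀ z, z ∈ A → z ∈ B → False := by
    intro z hzA hzB
    exact hmeet13 ⟨↑z, hzA.2, hzB.2⟩
  have hQmem : ∀ q ∈ Q.support, q ∈ A ∪ B := by
    intro q hq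
    have h1 := hQ1 q hq
    have h2 := hQ2 q hq
    rw [hK₁, Subgraph.verts_sup] at h1
    obtain ⟨x, hxr, hqx⟩ := mem_U h2
    rcases h1 with h1 | h1
    · -- q ∈ f v₁
      rcases hmeet v₁ x hm1 (hmr x hxr) ⟨↑q, h1, hqx⟩ with h | h
      · exact absurd (h ▸ hxr) hv1r
      · rcases E1 _ h with rfl | rfl
        · exact Or.inl ⟨hqx, h1⟩
        · exact absurd hxr hv2r
    · -- q ∈ f v₂
      rcases hmeet v₂ x hm2 (hmr x hxr) ⟨↑q, h1, hqx⟩ with h | h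
      · exact absurd (h ▸ hxr) hv2r
      · rcases E2 _ h with rfl | rfl
        · exact absurd hxr hv1r
        · exact Or.inr ⟨h1, hqx⟩
  have haA : (⟨p₀, hp₀S⟩ : S'.verts) ∈ A := ⟨hp01.1, hp01.2⟩
  have hbB : (⟨p₂, hp₂S⟩ : S'.verts) ∈ B := ⟨hp23.1, hp23.2⟩
  obtain ⟨x, y, hxy, hxA, hyB⟩ := cross hd Q haA hbB hQmem
  -- the crossing edge lives in some region f u with u in the cycle support
  have hxy' : (K₁ ⊔ K₂).Adj ↑x ↑y := hxy
  obtain ⟨u, hu, huadj⟩ : ∃ u ∈ w.support, (f u).Adj ↑x ↑y := by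
    rcases Subgraph.sup_adj.mp hxy' with h | h
    · rcases Subgraph.sup_adj.mp h with h | h
      · exact ⟨v₁, hm1, h⟩
      · exact ⟨v₂, hm2, h⟩
    · obtain ⟨u, hu, h⟩ := U_adj h
      exact ⟨u, hmr u hu, h⟩
  have hx' : ↑x ∈ (f u).verts := huadj.fst_mem
  have hy' : ↑y ∈ (f u).verts := huadj.snd_mem
  -- u must be adjacent-or-equal to v₁ (via x) and to v₂ (via y)
  have hu1 : u = v₁ ∨ u = v₀ ∨ u = v₂ := by
    rcases hmeet v₁ u hm1 hu ⟨↑x, hxA.2, hx'⟩ with h | h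
    · exact Or.inl h.symm
    · exact Or.inr (E1 _ h)
  have hu2 : u = v₂ ∨ u = v₁ ∨ u = v₃ := by
    rcases hmeet v₂ u hm2 hu ⟨↑y, hyB.1, hy'⟩ with h | h
    · exact Or.inl h.symm
    · exact Or.inr (E2 _ h)
  -- final contradiction
  rcases hu1 with rfl | rfl | rfl
  · -- u = v₁ : then y ∈ f v₁ ∩ f v₃
    exact hmeet13 ⟨↑y, hy', hyB.2⟩
  · -- u = v₀ : but v₀ ∉ {v₂, v₁, v₃}
    rcases hu2 with h | h | h
    · exact hv02 h
    · exact hne01 h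
    · exact h30 h.symm
  · -- u = v₂ : then x ∈ f v₀ ∩ f v₂
    exact hmeet02 ⟨↑x, hxA.1, hx'⟩
end

section
/- Let (H, 𝒱) be a graph-decomposition of a graph G with a fixed family (H_v) of co-parts, and suppose the decomposition is 2-acyclic (the union of any two co-parts is acyclic). Then for every vertex v, the co-part H_v equals the subgraph of ⋃_{u∈V(G)} H_u induced on the vertex set of H_v; in particular each H_v is an induced subtree of ⋃_u H_u. -/
open SimpleGraph

theorem key {V W : Type*} (H : SimpleGraph W) (f : V → H.Subgraph)
    (hconn : ∀ v, (f v).Connected)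
    (h2 : ∀ u v : V, ((f u) ⊔ (f v)).coe.IsAcyclic)
    (v u : V) (a b : W) (ha : a ∈ (f v).verts) (hb : b ∈ (f v).verts)
    (hadj : (f u).Adj a b) : (f v).Adj a b := by
  classical
  obtain ⟨w⟩ := (hconn v) ⟨a, ha⟩ ⟨b, hb⟩
  set p := w.toPath with hp
  have hle : f v ≤ f u ⊔ f v := le_sup_right
  have hinj := Subgraph.inclusion.injective hle
  let q : ((f u) ⊔ (f v)).coe.Path _ _ := p.map (Subgraph.inclusion hle) hinj
  have hadj' : ((f u) ⊔ (f v)).coe.Adj ⟨a, Or.inr ha⟩ ⟨b, Or.inr hb⟩ :=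
    Subgraph.sup_adj.2 (Or.inl hadj)
  let e : ((f u) ⊔ (f v)).coe.Path ⟨a, Or.inr ha⟩ ⟨b, Or.inr hb⟩ :=
    ⟨Walk.cons hadj' Walk.nil, by simp [Walk.isPath_def, hadj'.ne]⟩
  have hq : q = e := (h2 u v).path_unique q e
  have hlen : (p.1).length = 1 := by
    have := congrArg (fun r : ((f u) ⊔ (f v)).coe.Path _ _ => r.1.length) hq
    simp [q, e, Path.map] at this
    exact this.trans rfl
  exact (Walk.adj_of_length_eq_one hlen : (f v).coe.Adj ⟨a,ha⟩ ⟨b,hb⟩)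

/-- in a 2-acyclic graph-decomposition (given by its co-parts `f v`),
every co-part is the induced subgraph of the union of all co-parts on its vertex set,
and is an (induced) subtree. -/
theorem stmt15 {V W : Type*} (G : SimpleGraph V) (H : SimpleGraph W) (f : V → H.Subgraph)
    (hconn : ∀ v, (f v).Connected)
    (hedge : ∀ u v, G.Adj u v → ((f u).verts ∩ (f v).verts).Nonempty)
    (h2 : ∀ u v : V, ((f u) ⊔ (f v)).coe.IsAcyclic) :
    ∀ v : V, f v = (⨆ u, f u).induce (f v).verts ∧ (f v).coe.IsTree := by
  intro v
  constructor
  · apply Subgraph.ext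
    · simp
    · ext a b
      simp only [Subgraph.induce_adj, Subgraph.iSup_adj]
      constructor
      · intro h
        exact ⟨h.fst_mem, h.snd_mem, v, h⟩
      · rintro ⟨ha, hb, u, hu⟩
        exact key H f hconn h2 v u a b ha hb hu
  · have hac := h2 v v
    rw [sup_idem] at hac
    exact ⟨(hconn v), hac⟩
end

section
/- Let (H, 𝒱) be an honest, r-acyclic graph-decomposition of a graph G, where r ≥ 3. Then the model graph H has girth greater than r, i.e., H contains no cycle of length at most r. -/
open SimpleGraph

/-- The co-part of a vertex `v` in a graph-decomposition with bags `𝒱`: the subgraph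
of the model graph `H` induced on the nodes whose bag contains `v`. -/
def copart {V W : Type*} (H : SimpleGraph W) (𝒱 : W → Set V) (v : V) : H.Subgraph :=
  (⊤ : H.Subgraph).induce {h | v ∈ 𝒱 h}

private lemma lift_walk {W : Type*} {H : SimpleGraph W} (K : H.Subgraph) :
    ∀ {x y : W} (w : H.Walk x y) (hx : x ∈ K.verts)
      (_ : ∀ e ∈ w.edges, e ∈ K.edgeSet),
      ∃ (hy : y ∈ K.verts) (q : K.coe.Walk ⟨x, hx⟩ ⟨y, hy⟩), q.map K.hom = w := by
  intro x y w
  induction w with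
  | nil => exact fun hx _ => ⟨hx, Walk.nil, rfl⟩
  | @cons x z y h p ih =>
    intro hx he
    have hadj : K.Adj x z := by
      have := he s(x, z) (by simp)
      exact this
    have hz : z ∈ K.verts := K.edge_vert hadj.symm
    obtain ⟨hy, q, hq⟩ := ih hz (fun e heq => he e (by simp [heq]))
    exact ⟨hy, Walk.cons (by exact hadj : K.coe.Adj ⟨x, hx⟩ ⟨z, hz⟩) q,
      by subst hq; rfl⟩

/-- an honest `r`-acyclic graph-decomposition of `G` over `H` with
`r ≥ 3` forces `H` to have girth greater than `r`. -/
theorem stmt16 {V W : Type*} (G : SimpleGraph V) (H : SimpleGraph W) (𝒱 : W → Set V)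
    (r : ℕ) (hr : 3 ≤ r)
    (hH1v : ∀ v : V, ∃ h, v ∈ 𝒱 h)
    (hH1e : ∀ u v : V, G.Adj u v → ∃ h, u ∈ 𝒱 h ∧ v ∈ 𝒱 h)
    (hH2 : ∀ v : V, (copart H 𝒱 v).Connected)
    (honest_bags : ∀ h : W, (𝒱 h).Nonempty)
    (honest_adh : ∀ h₁ h₂ : W, H.Adj h₁ h₂ → (𝒱 h₁ ∩ 𝒱 h₂).Nonempty)
    (hacyc : ∀ X : Finset V, X.card ≤ r → (⨆ x ∈ X, copart H 𝒱 x).coe.IsAcyclic) :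
    ∀ (a : W) (w : H.Walk a a), w.IsCycle → r < w.length := by
  classical
  intro a w hc
  by_contra hle
  push_neg at hle
  set f : H.Dart → V := fun d => (honest_adh d.fst d.snd d.adj).choose with hf
  have hfspec : ∀ d : H.Dart, f d ∈ 𝒱 d.fst ∧ f d ∈ 𝒱 d.snd := fun d =>
    (honest_adh d.fst d.snd d.adj).choose_spec
  set X : Finset V := (w.darts.map f).toFinset with hX
  have hcard : X.card ≤ r := le_trans (le_trans (List.toFinset_card_le _)
    (by simp [Walk.length_darts])) hle
  set K : H.Subgraph := ⨆ x ∈ X, copart H 𝒱 x with hK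
  have hedge : ∀ e ∈ w.edges, e ∈ K.edgeSet := by
    intro e heq
    rw [Walk.edges] at heq
    obtain ⟨d, hd, rfl⟩ := List.mem_map.mp heq
    have hfd : f d ∈ X := by simp [hX]; exact ⟨d, hd, rfl⟩
    have hle1 : copart H 𝒱 (f d) ≤ K := le_biSup (fun x => copart H 𝒱 x) hfd
    have hadj : (copart H 𝒱 (f d)).Adj d.fst d.snd := by
      simp [copart, Subgraph.induce_adj, (hfspec d).1, (hfspec d).2, d.adj]
    have : K.Adj d.fst d.snd := hle1.2 hadj
    exact this
  have ha : a ∈ K.verts := by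
    cases w with
    | nil => exact absurd hc (by simp)
    | @cons _ z _ h p =>
      exact K.edge_vert (hedge s(a, z) (by simp))
  obtain ⟨ha', q, hq⟩ := lift_walk K w ha hedge
  have hqc : q.IsCycle := by
    rw [← Walk.map_isCycle_iff_of_injective Subgraph.hom_injective, hq]
    exact hc
  exact hacyc X hcard q hqc
end

section
/- Let G be a finite graph and H a spanning subgraph of the intersection graph 𝐊(G) of maximal cliques of G such that H[K_G(v)] is acyclic for every vertex v of G (H is a 1-acyclic spanning subgraph). Then the total weight of H, i.e., ∑_{K₁K₂ ∈ E(H)} |K₁ ∩ K₂|, is at most W(G) := (∑_{K maximal clique of G} |K|) − |V(G)|. Moreover, equality holds if and only if H[K_G(v)] is connected for every vertex v of G. -/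
open SimpleGraph

section ForestLemmas

open SimpleGraph.Walk

variable {W : Type*} {G : SimpleGraph W}

/-- A chosen representative of the connected component of `v`. -/
noncomputable def groot (G : SimpleGraph W) (v : W) : W :=
  (G.connectedComponentMk v).out

lemma groot_spec (v : W) : G.connectedComponentMk (groot G v) = G.connectedComponentMk v :=
  Quot.out_eq _

lemma reachable_groot (v : W) : G.Reachable v (groot G v) :=
  (SimpleGraph.ConnectedComponent.exact (groot_spec v)).symm

lemma groot_eq_of_reachable {u v : W} (h : G.Reachable u v) : groot G u = groot G v := by
  unfold groot
  rw [SimpleGraph.ConnectedComponent.sound h]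

lemma groot_groot (v : W) : groot G (groot G v) = groot G v :=
  groot_eq_of_reachable (reachable_groot v).symm

lemma groot_eq_of_adj {u v : W} (h : G.Adj u v) : groot G u = groot G v :=
  groot_eq_of_reachable h.reachable

lemma forest_card_edges [Fintype W] [DecidableEq W] (hG : G.IsAcyclic) [Fintype G.edgeSet] :
    G.edgeFinset.card = (Finset.univ.filter (fun v => groot G v ≠ v)).card := by
  classical
  have hex : ∀ w : W, ∃! p : G.Walk w (groot G w), p.IsPath := by
    intro w
    obtain ⟨p0⟩ := reachable_groot (G := G) w
    refine ⟨p0.toPath, p0.toPath.2, ?_⟩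
    intro q hq
    exact congrArg Subtype.val (hG.path_unique ⟨q, hq⟩ p0.toPath)
  choose f hf hf' using hex
  refine Eq.symm <| Finset.card_bij
          (fun w _hw => ((f w).firstDart <| ?notNil).edge)
          (fun a ha => ?memEdges) ?inj ?surj
  case notNil =>
    exact not_nil_of_ne (Ne.symm (by simpa using _hw))
  case memEdges => simp
  case inj =>
    intro a ha b hb h
    wlog h' : (f a).length ≤ (f b).length generalizing a b
    · exact Eq.symm (this _ hb _ ha h.symm (le_of_not_ge h'))
    have hane : groot G a ≠ a := by simpa using ha
    rw [dart_edge_eq_iff] at h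
    obtain (h | h) := h
    · exact congrArg (·.fst) h
    · have h1 : ((f a).firstDart <| not_nil_of_ne (Ne.symm hane)).snd = b :=
        congrArg (·.snd) h
      have hadj : G.Adj a b := by
        have hd := ((f a).firstDart <| not_nil_of_ne (Ne.symm hane)).adj
        rwa [h1] at hd
      have hr : groot G a = groot G b := groot_eq_of_adj hadj
      have h3 := congrArg SimpleGraph.Walk.length
        (hf' _ (((f a).tail).copy h1 hr) ?_)
      · replace h3 := (length_copy _ _ _).symm.trans h3
        rw [← add_left_inj 1, length_tail_add_one (not_nil_of_ne (Ne.symm hane))]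
          at h3
        omega
      · simp only [ne_eq, eq_mp_eq_cast, id_eq, isPath_copy]
        exact (isPath_copy _ _ _).2 (hf _).tail
  case surj =>
    simp only [mem_edgeFinset, Finset.mem_filter, Finset.mem_univ, true_and, Sym2.forall,
      SimpleGraph.mem_edgeSet]
    intro x y h
    wlog h' : (f x).length ≤ (f y).length generalizing x y
    · rw [Sym2.eq_swap]
      exact this y x h.symm (le_of_not_ge h')
    have hrxy : groot G x = groot G y := groot_eq_of_adj h
    have hy : groot G y ≠ y := by
      intro hyy
      have h0 : (SimpleGraph.Walk.nil.copy rfl hyy.symm : G.Walk y (groot G y)) = f y :=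
        hf' y _ (by simp)
      have h0' : (f y).length = 0 := by rw [← h0]; simp
      have e1 : y = groot G x := (hrxy.trans hyy).symm
      have h1'' : ((SimpleGraph.Walk.cons h SimpleGraph.Walk.nil).copy rfl e1) = f x :=
        hf' x _ (by simp [h.ne])
      have h1' : (f x).length = 1 := by rw [← h1'']; simp
      omega
    refine ⟨y, by simpa using hy, dart_edge_eq_mk'_iff.2 <| Or.inr ?_⟩
    have hcontra : y ∉ (f x).support := by
      intro hy'
      have hd := hf' y (((f x).dropUntil y hy').copy rfl hrxy)
        (by simpa using (hf x).dropUntil hy')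
      have hlen : ((f x).dropUntil y hy').length = (f y).length := by
        rw [← hd]; simp
      have htake : ((f x).takeUntil y hy').length ≠ 0 := by
        intro h0
        exact h.ne (eq_of_length_eq_zero h0)
      have hsum := congrArg SimpleGraph.Walk.length ((f x).take_spec hy')
      rw [length_append] at hsum
      omega
    have hfy : ((SimpleGraph.Walk.cons h.symm (f x)).copy rfl hrxy) = f y :=
      hf' y _ (by simpa using And.intro (hf x) hcontra)
    have hgv : (f y).getVert 1 = x := by
      rw [← hfy]; simp
    simp [Prod.ext_iff, hgv]

lemma forest_card_split [Fintype W] [DecidableEq W] (hG : G.IsAcyclic) [Fintype G.edgeSet] :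
    G.edgeFinset.card + (Finset.univ.filter (fun v => groot G v = v)).card
      = Fintype.card W := by
  rw [forest_card_edges hG]
  rw [add_comm]
  simpa using Finset.card_filter_add_card_filter_not
    (s := Finset.univ) (p := fun v => groot G v = v)

lemma forest_card_le [Fintype W] [DecidableEq W] [Nonempty W] (hG : G.IsAcyclic)
    [Fintype G.edgeSet] : G.edgeFinset.card + 1 ≤ Fintype.card W := by
  have h := forest_card_split hG
  have hne : (Finset.univ.filter (fun v => groot G v = v)).Nonempty := by
    obtain ⟨v⟩ := ‹Nonempty W›
    exact ⟨groot G v, by simp [groot_groot]⟩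
  have := Finset.card_pos.2 hne
  omega

lemma forest_card_eq_iff [Fintype W] [DecidableEq W] [Nonempty W] (hG : G.IsAcyclic)
    [Fintype G.edgeSet] : G.edgeFinset.card + 1 = Fintype.card W ↔ G.Connected := by
  have h := forest_card_split hG
  constructor
  · intro he
    have hc : (Finset.univ.filter (fun v => groot G v = v)).card = 1 := by omega
    obtain ⟨r, hr⟩ := Finset.card_eq_one.1 hc
    have hall : ∀ v : W, groot G v = r := by
      intro v
      have : groot G v ∈ Finset.univ.filter (fun v => groot G v = v) := by
        simp [groot_groot]
      rw [hr, Finset.mem_singleton] at this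
      exact this
    constructor
    intro v w
    exact (reachable_groot v).trans (by rw [hall v, ← hall w]; exact (reachable_groot w).symm)
  · intro hc
    obtain ⟨v₀⟩ := ‹Nonempty W›
    have hall : ∀ v : W, groot G v = groot G v₀ := fun v =>
      groot_eq_of_reachable (hc.preconnected v v₀)
    have : (Finset.univ.filter (fun v => groot G v = v)) = {groot G v₀} := by
      ext v
      simp only [Finset.mem_filter, Finset.mem_univ, true_and, Finset.mem_singleton]
      constructor
      · intro hv; rw [← hv, hall v]
      · intro hv; subst hv; exact groot_groot v₀
    rw [this] at h
    simpa using h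

end ForestLemmas

/-- `s` is an (inclusion-)maximal clique of `G`. -/
def IsMaxClique {V : Type*} (G : SimpleGraph V) (s : Finset V) : Prop :=
  G.IsClique (↑s : Set V) ∧ ∀ t : Finset V, G.IsClique (↑t : Set V) → s ⊆ t → s = t

/-- The intersection graph `𝐊(G)` of the maximal cliques of `G`. -/
def cliqueIG {V : Type*} [DecidableEq V] (G : SimpleGraph V) :
    SimpleGraph {s : Finset V // IsMaxClique G s} where
  Adj K₁ K₂ := K₁ ≠ K₂ ∧ (K₁.1 ∩ K₂.1).Nonempty
  symm := ⟨by
    rintro K₁ K₂ ⟨h1, h2⟩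
    exact ⟨h1.symm, by rwa [Finset.inter_comm]⟩⟩
  loopless := ⟨fun K h => h.1 rfl⟩

/-- The weight of an edge of `𝐊(G)`: the size of the intersection of the two cliques. -/
def edgeWeight {V : Type*} [DecidableEq V] (G : SimpleGraph V) :
    Sym2 {s : Finset V // IsMaxClique G s} → ℕ :=
  Sym2.lift ⟨fun K₁ K₂ => (K₁.1 ∩ K₂.1).card, fun K₁ K₂ => by dsimp only; rw [Finset.inter_comm]⟩

lemma exists_maxclique_mem {V : Type*} [Fintype V] [DecidableEq V] (G : SimpleGraph V) (v : V) :
    ∃ s : Finset V, IsMaxClique G s ∧ v ∈ s := by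
  classical
  have hne : (Finset.univ.filter
      (fun s : Finset V => G.IsClique (↑s : Set V) ∧ v ∈ s)).Nonempty := by
    refine ⟨{v}, ?_⟩
    simp [SimpleGraph.IsClique]
  obtain ⟨s, hs, hmax⟩ := Finset.exists_max_image _ Finset.card hne
  simp only [Finset.mem_filter, Finset.mem_univ, true_and] at hs
  refine ⟨s, ⟨hs.1, fun t ht hst => ?_⟩, hs.2⟩
  have hvt : v ∈ t := hst hs.2
  have hle : t.card ≤ s.card := hmax t (by simp [ht, hvt])
  exact Finset.eq_of_subset_of_card_le hst hle

/-- for a 1-acyclic spanning subgraph `H` of `𝐊(G)`, the total weight of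
`H` is at most `W(G) = (∑_{K maximal clique} |K|) - |V(G)|`, with equality iff all the
induced subgraphs `H[K_G(v)]` are connected. -/
theorem stmt18 {V : Type} [Fintype V] [DecidableEq V] (G : SimpleGraph V)
    (H : SimpleGraph {s : Finset V // IsMaxClique G s}) (hH : H ≤ cliqueIG G)
    (h1 : ∀ v : V, (H.induce {K | v ∈ K.1}).IsAcyclic) :
    (∑ e ∈ H.edgeSet.toFinite.toFinset, edgeWeight G e) ≤
      (∑ K ∈ {s : Finset V | IsMaxClique G s}.toFinite.toFinset, K.card)
        - Fintype.card V ∧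
    ((∑ e ∈ H.edgeSet.toFinite.toFinset, edgeWeight G e) =
      (∑ K ∈ {s : Finset V | IsMaxClique G s}.toFinite.toFinset, K.card)
        - Fintype.card V ↔
      ∀ v : V, (H.induce {K | v ∈ K.1}).Connected) := by
  classical
  have hedge : H.edgeSet.toFinite.toFinset = H.edgeFinset := by
    ext e; rw [Set.Finite.mem_toFinset, SimpleGraph.mem_edgeFinset]
  have hMCfin : ∀ K : Finset V,
      K ∈ {s : Finset V | IsMaxClique G s}.toFinite.toFinset ↔ IsMaxClique G K := by
    intro K; simp [Set.Finite.mem_toFinset]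
  have hmx : ∀ v : V, ∃ K : {s : Finset V // IsMaxClique G s}, v ∈ K.1 := fun v => by
    obtain ⟨s, hs, hv⟩ := exists_maxclique_mem G v
    exact ⟨⟨s, hs⟩, hv⟩
  -- per-edge weight as a count over vertices
  have hw : ∀ e : Sym2 {s : Finset V // IsMaxClique G s},
      edgeWeight G e = ∑ v : V, if (∀ K ∈ e, v ∈ K.1) then 1 else 0 := by
    intro e
    refine Sym2.inductionOn e ?_
    intro K₁ K₂
    have h2 : K₁.1 ∩ K₂.1 = Finset.univ.filter (fun v => ∀ K ∈ s(K₁, K₂), v ∈ K.1) := by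
      ext v
      simp only [Finset.mem_inter, Finset.mem_filter, Finset.mem_univ, true_and, Sym2.mem_iff]
      constructor
      · rintro ⟨ha, hb⟩ K (rfl | rfl) <;> assumption
      · intro h; exact ⟨h K₁ (Or.inl rfl), h K₂ (Or.inr rfl)⟩
    show (K₁.1 ∩ K₂.1).card = _
    rw [h2, Finset.card_filter]
  -- per-vertex edge count equals the edge count of the induced graph
  have hcount : ∀ v : V, (H.edgeFinset.filter (fun e => ∀ K ∈ e, v ∈ K.1)).card
      = (H.induce {K | v ∈ K.1}).edgeFinset.card := by
    intro v
    refine Eq.symm (Finset.card_bij (fun e _ => Sym2.map Subtype.val e) ?_ ?_ ?_)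
    · intro e he
      revert he
      refine Sym2.inductionOn e ?_
      intro a b he
      rw [SimpleGraph.mem_edgeFinset, SimpleGraph.mem_edgeSet] at he
      have hadj : H.Adj a.1 b.1 := he
      simp only [Sym2.map_pair_eq, Finset.mem_filter, SimpleGraph.mem_edgeFinset,
        SimpleGraph.mem_edgeSet]
      refine ⟨hadj, ?_⟩
      intro K hK
      rw [Sym2.mem_iff] at hK
      rcases hK with rfl | rfl
      · exact a.2
      · exact b.2
    · intro e1 h1 e2 h2 h
      exact Sym2.map.injective Subtype.val_injective h
    · intro e he
      revert he
      refine Sym2.inductionOn e ?_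
      intro K₁ K₂ he
      simp only [Finset.mem_filter, SimpleGraph.mem_edgeFinset, SimpleGraph.mem_edgeSet] at he
      obtain ⟨hadj, hmem⟩ := he
      have hm₁ : v ∈ K₁.1 := hmem K₁ (Sym2.mem_iff.2 (Or.inl rfl))
      have hm₂ : v ∈ K₂.1 := hmem K₂ (Sym2.mem_iff.2 (Or.inr rfl))
      refine ⟨s((⟨K₁, hm₁⟩ : {K : {s : Finset V // IsMaxClique G s} | v ∈ K.1}),
        (⟨K₂, hm₂⟩ : {K : {s : Finset V // IsMaxClique G s} | v ∈ K.1})), ?_, rfl⟩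
      rw [SimpleGraph.mem_edgeFinset, SimpleGraph.mem_edgeSet]
      exact hadj
  -- the main double counting
  have hmain : ∑ e ∈ H.edgeFinset, edgeWeight G e
      = ∑ v : V, (H.induce {K | v ∈ K.1}).edgeFinset.card := by
    calc ∑ e ∈ H.edgeFinset, edgeWeight G e
        = ∑ e ∈ H.edgeFinset, ∑ v : V, (if (∀ K ∈ e, v ∈ K.1) then 1 else 0) :=
          Finset.sum_congr rfl (fun e _ => hw e)
      _ = ∑ v : V, ∑ e ∈ H.edgeFinset, (if (∀ K ∈ e, v ∈ K.1) then 1 else 0) :=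
          Finset.sum_comm
      _ = ∑ v : V, (H.edgeFinset.filter (fun e => ∀ K ∈ e, v ∈ K.1)).card :=
          Finset.sum_congr rfl (fun v _ => (Finset.card_filter _ _).symm)
      _ = ∑ v : V, (H.induce {K | v ∈ K.1}).edgeFinset.card :=
          Finset.sum_congr rfl (fun v _ => hcount v)
  -- total clique weight as a sum of subtype cardinalities
  have hWsum : ∑ v : V, Fintype.card ↥{K : {s : Finset V // IsMaxClique G s} | v ∈ K.1}
      = ∑ K ∈ {s : Finset V | IsMaxClique G s}.toFinite.toFinset, K.card := by
    have h1' : ∀ v : V, Fintype.card ↥{K : {s : Finset V // IsMaxClique G s} | v ∈ K.1}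
        = ∑ K : {s : Finset V // IsMaxClique G s}, if v ∈ K.1 then 1 else 0 := by
      intro v
      rw [Fintype.card_subtype, Finset.card_filter]
      exact Finset.sum_congr rfl fun K _ => if_congr Iff.rfl rfl rfl
    calc ∑ v : V, Fintype.card ↥{K : {s : Finset V // IsMaxClique G s} | v ∈ K.1}
        = ∑ v : V, ∑ K : {s : Finset V // IsMaxClique G s}, if v ∈ K.1 then 1 else 0 :=
          Finset.sum_congr rfl (fun v _ => h1' v)
      _ = ∑ K : {s : Finset V // IsMaxClique G s}, ∑ v : V, if v ∈ K.1 then 1 else 0 :=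
          Finset.sum_comm
      _ = ∑ K : {s : Finset V // IsMaxClique G s}, K.1.card := by
          refine Finset.sum_congr rfl fun K _ => ?_
          rw [← Finset.card_filter]
          congr 1
          ext x; simp
      _ = ∑ K ∈ {s : Finset V | IsMaxClique G s}.toFinite.toFinset, K.card :=
          (Finset.sum_subtype _ (fun x => hMCfin x) Finset.card).symm
  -- per-vertex inequalities
  have hle : ∀ v : V, (H.induce {K | v ∈ K.1}).edgeFinset.card + 1
      ≤ Fintype.card ↥{K : {s : Finset V // IsMaxClique G s} | v ∈ K.1} := by
    intro v
    haveI : Nonempty ↥{K : {s : Finset V // IsMaxClique G s} | v ∈ K.1} := by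
      obtain ⟨K, hK⟩ := hmx v; exact ⟨⟨K, hK⟩⟩
    exact forest_card_le (h1 v)
  have hiff : ∀ v : V, ((H.induce {K | v ∈ K.1}).edgeFinset.card + 1
      = Fintype.card ↥{K : {s : Finset V // IsMaxClique G s} | v ∈ K.1} ↔
      (H.induce {K | v ∈ K.1}).Connected) := by
    intro v
    haveI : Nonempty ↥{K : {s : Finset V // IsMaxClique G s} | v ∈ K.1} := by
      obtain ⟨K, hK⟩ := hmx v; exact ⟨⟨K, hK⟩⟩
    exact forest_card_eq_iff (h1 v)
  have hsum1 : ∑ v : V, ((H.induce {K | v ∈ K.1}).edgeFinset.card + 1)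
      = (∑ v : V, (H.induce {K | v ∈ K.1}).edgeFinset.card) + Fintype.card V := by
    rw [Finset.sum_add_distrib, Finset.sum_const, smul_eq_mul, mul_one, Finset.card_univ]
  have hTle : (∑ v : V, (H.induce {K | v ∈ K.1}).edgeFinset.card) + Fintype.card V
      ≤ ∑ K ∈ {s : Finset V | IsMaxClique G s}.toFinite.toFinset, K.card := by
    rw [← hWsum, ← hsum1]
    exact Finset.sum_le_sum (fun v _ => hle v)
  rw [hedge, hmain]
  constructor
  · omega
  · have heqiff : ((∑ v : V, (H.induce {K | v ∈ K.1}).edgeFinset.card)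
        = (∑ K ∈ {s : Finset V | IsMaxClique G s}.toFinite.toFinset, K.card)
          - Fintype.card V) ↔
        ((∑ v : V, (H.induce {K | v ∈ K.1}).edgeFinset.card) + Fintype.card V
        = ∑ K ∈ {s : Finset V | IsMaxClique G s}.toFinite.toFinset, K.card) := by
      omega
    rw [heqiff, ← hWsum, ← hsum1,
      Finset.sum_eq_sum_iff_of_le (fun v _ => hle v)]
    constructor
    · intro h v
      exact (hiff v).1 (h v (Finset.mem_univ v))
    · intro h v _
      exact (hiff v).2 (h v)
end
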